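/- arXiv:1702.02622 — 4 statements merged into one kernel-verified Lean document; each statement's English description precedes it below -/
import Mathlib

section
/- Let 0 < α ≤ 1, β < 0, γ ∈ ℝ, 0 < ν ≤ 1 and λ > 0. For every real u with |u| < 1 and every t > 0, the probability generating function of the SSTFPP satisfies Σ_{n=0}^∞ u^n · p^{α,β,γ}_ν(n,t) = Σ_{k=0}^∞ C_k · (-λ^ν (1-u)^ν t^{-β})^k / Γ(1-kβ). -/
open Real Finset
open Filter Topology

/-- Coefficients `C_k = ∏_{j=1}^k Γ(1+γ-jβ)/Γ(1+γ+α-(j-1)β)`. -/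
noncomputable def Ccoef (α β γ : ℝ) (k : ℕ) : ℝ :=
  ∏ j ∈ Finset.range k,
    Real.Gamma (1 + γ - ((j : ℝ) + 1) * β) / Real.Gamma (1 + γ + α - (j : ℝ) * β)

/-- State probabilities of the Saigo space and time fractional Poisson process. -/
noncomputable def pSS (α β γ ν lam : ℝ) (n : ℕ) (t : ℝ) : ℝ :=
  ((-1) ^ n / n.factorial) * ∑' k : ℕ,
    Ccoef α β γ k * (-(lam ^ ν) * t ^ (-β)) ^ k / Real.Gamma (1 - (k : ℝ) * β) *
      (Real.Gamma ((k : ℝ) * ν + 1) / Real.Gamma ((k : ℝ) * ν + 1 - n))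


/-- Γ(a+1)/Γ(a+1-n) equals the falling factorial. -/
lemma gamma_fall (a : ℝ) (ha : 0 ≤ a) (n : ℕ) :
    Real.Gamma (a + 1) / Real.Gamma (a + 1 - n) = ∏ i ∈ range n, (a - i) := by
  induction n with
  | zero =>
    simp only [Nat.cast_zero, sub_zero, range_zero, prod_empty]
    exact div_self (Real.Gamma_pos_of_pos (by linarith)).ne'
  | succ n ih =>
    have h1 : a + 1 - ((n : ℕ) + 1 : ℕ) = a - n := by push_cast; ring
    have h2 : a + 1 - (n : ℕ) = (a - n) + 1 := by push_cast; ring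
    rw [prod_range_succ, ← ih, h1, h2]
    rcases eq_or_ne (a - (n : ℝ)) 0 with h | h
    · rw [h, Real.Gamma_zero]
      simp
    · rw [Real.Gamma_add_one h, div_mul_eq_mul_div, mul_comm (a - (n : ℝ)) (Real.Gamma (a - n)),
        ← mul_div_mul_right (Real.Gamma (a+1)) (Real.Gamma (a - ↑n)) h]

/-- Binomial coefficients `(a choose n) = a(a-1)...(a-n+1)/n!`. -/
noncomputable def bc (a : ℝ) (n : ℕ) : ℝ := (∏ i ∈ range n, (a - i)) / n.factorial

lemma bc_succ (a : ℝ) (n : ℕ) : bc a (n + 1) = bc a n * ((a - n) / (n + 1)) := by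
  unfold bc
  rw [prod_range_succ, Nat.factorial_succ, div_mul_div_comm]
  push_cast
  rw [div_eq_div_iff (by positivity) (by positivity)]
  ring

lemma tendsto_absratio (a c : ℝ) :
    Tendsto (fun n : ℕ => |a - n| / (n + c)) atTop (𝓝 1) := by
  have h1 : Tendsto (fun n : ℕ => 1 - (a + c) / ((n : ℝ) + c)) atTop (𝓝 (1 - 0)) := by
    refine tendsto_const_nhds.sub (Tendsto.div_atTop tendsto_const_nhds ?_)
    exact tendsto_atTop_add_const_right _ c tendsto_natCast_atTop_atTop
  rw [sub_zero] at h1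
  refine h1.congr' ?_
  filter_upwards [tendsto_natCast_atTop_atTop.eventually_ge_atTop a,
    tendsto_natCast_atTop_atTop.eventually_ge_atTop (1 - c)] with n hn hn'
  have hpos : 0 < (n : ℝ) + c := by linarith
  rw [abs_of_nonpos (by linarith)]
  field_simp
  ring

lemma summable_bc (a : ℝ) {v : ℝ} (hv : |v| < 1) : Summable (fun n => bc a n * v ^ n) := by
  have hr1 : (1 + |v|) / 2 < 1 := by have := abs_nonneg v; linarith
  refine summable_of_ratio_norm_eventually_le hr1 ?_
  have hlim : Tendsto (fun n : ℕ => |a - n| / (n + 1) * |v|) atTop (𝓝 (1 * |v|)) :=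
    (tendsto_absratio a 1).mul_const _
  rw [one_mul] at hlim
  have hev := Filter.Tendsto.eventually_le_const (show |v| < (1 + |v|) / 2 by linarith) hlim
  filter_upwards [hev] with n hn
  have key : bc a (n + 1) * v ^ (n + 1) = (bc a n * v ^ n) * ((a - n) / (n + 1) * v) := by
    rw [bc_succ, pow_succ]; ring
  rw [key, norm_mul]
  have h3 : ‖(a - (n:ℝ)) / ((n:ℝ) + 1) * v‖ = |a - (n:ℝ)| / ((n:ℝ) + 1) * |v| := by
    simp only [Real.norm_eq_abs, abs_mul, abs_div,
      abs_of_pos (show (0:ℝ) < (n:ℝ) + 1 by positivity)]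
  rw [h3, mul_comm ((1 + |v|)/2)]
  exact mul_le_mul_of_nonneg_left hn (norm_nonneg (bc a n * v ^ n))

lemma summable_bc_deriv (a : ℝ) {r : ℝ} (hr0 : 0 ≤ r) (hr : r < 1) :
    Summable (fun n : ℕ => |bc a n| * n * r ^ (n - 1)) := by
  have hr1 : (1 + r) / 2 < 1 := by linarith
  refine summable_of_ratio_norm_eventually_le hr1 ?_
  have hlim : Tendsto (fun n : ℕ => |a - n| / (n + 0) * r) atTop (𝓝 (1 * r)) :=
    (tendsto_absratio a 0).mul_const _
  rw [one_mul] at hlim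
  have hev := Filter.Tendsto.eventually_le_const (show r < (1 + r) / 2 by linarith) hlim
  filter_upwards [hev, eventually_ge_atTop 1] with n hn hn1
  have hnn : (0:ℝ) < (n:ℝ) := by exact_mod_cast hn1
  have key : |bc a (n + 1)| * ((n:ℝ) + 1) * r ^ n =
      (|bc a n| * n * r ^ (n - 1)) * (|a - n| / ((n:ℝ) + 0) * r) := by
    rw [bc_succ, abs_mul, abs_div]
    rw [abs_of_pos (show (0:ℝ) < (n:ℝ)+1 by positivity)]
    have hpow : r ^ n = r ^ (n - 1) * r := by
      rw [← pow_succ]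
      congr 1
      omega
    rw [hpow, add_zero]
    field_simp
  have hA : (0:ℝ) ≤ |bc a (n+1)| * ((n+1 : ℕ) : ℝ) * r ^ (n + 1 - 1) :=
    mul_nonneg (mul_nonneg (abs_nonneg _) (Nat.cast_nonneg _)) (pow_nonneg hr0 _)
  have hB : (0:ℝ) ≤ |bc a n| * (n : ℝ) * r ^ (n - 1) :=
    mul_nonneg (mul_nonneg (abs_nonneg _) (Nat.cast_nonneg _)) (pow_nonneg hr0 _)
  rw [Real.norm_eq_abs, Real.norm_eq_abs, abs_of_nonneg hA, abs_of_nonneg hB]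
  push_cast
  rw [key, mul_comm ((1+r)/2)]
  exact mul_le_mul_of_nonneg_left hn (by
    exact mul_nonneg (mul_nonneg (abs_nonneg _) (Nat.cast_nonneg _)) (pow_nonneg hr0 _))


lemma hasSum_binomial (a : ℝ) {v : ℝ} (hv : |v| < 1) :
    HasSum (fun n => bc a n * v ^ n) ((1 + v) ^ a) := by
  have hr0 : (0:ℝ) ≤ (1 + |v|) / 2 := by positivity
  have hr1 : (1 + |v|) / 2 < 1 := by have := abs_nonneg v; linarith
  have hvr : |v| < (1 + |v|) / 2 := by linarith
  set r : ℝ := (1 + |v|) / 2 with hrdef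
  set t : Set ℝ := Set.Ioo (-r) r with htdef
  have hmem : ∀ y ∈ t, |y| < r := fun y hy => abs_lt.mpr ⟨hy.1, hy.2⟩
  have hv_t : v ∈ t := Set.mem_Ioo.mpr (abs_lt.mp hvr)
  have hrpos : 0 < r := by rw [hrdef]; positivity
  have h0_t : (0:ℝ) ∈ t := Set.mem_Ioo.mpr ⟨neg_lt_zero.mpr hrpos, hrpos⟩
  set f : ℝ → ℝ := fun z => ∑' n, bc a n * z ^ n with hfdef
  set S : ℝ → ℝ := fun y => ∑' n : ℕ, bc a n * ((n:ℝ) * y ^ (n - 1)) with hSdef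
  have hu := summable_bc_deriv a hr0 hr1
  have hgbound : ∀ (n : ℕ), ∀ y ∈ t, ‖bc a n * ((n:ℝ) * y ^ (n - 1))‖ ≤
      |bc a n| * n * r ^ (n - 1) := by
    intro n y hy
    rw [Real.norm_eq_abs, abs_mul, abs_mul, abs_pow, ← mul_assoc, Nat.abs_cast]
    exact mul_le_mul_of_nonneg_left
      (pow_le_pow_left₀ (abs_nonneg y) (hmem y hy).le _)
      (by positivity)
  have hderiv : ∀ y ∈ t, HasDerivAt f (S y) y := by
    intro y hy
    exact hasDerivAt_tsum_of_isPreconnected hu isOpen_Ioo (convex_Ioo _ _).isPreconnected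
      (fun n z _ => (hasDerivAt_pow n z).const_mul (bc a n))
      (fun n z hz => hgbound n z hz) h0_t (summable_bc a (by simp)) hy
  -- the ODE
  have hODE : ∀ y ∈ t, (1 + y) * S y = a * f y := by
    intro y hy
    have hy1 : |y| < 1 := (hmem y hy).trans hr1
    have hsum1 : Summable (fun n : ℕ => bc a n * ((n:ℝ) * y ^ (n - 1))) :=
      Summable.of_norm_bounded hu (fun n => hgbound n y hy)
    have hA : Summable (fun n => bc a n * y ^ n) := summable_bc a hy1
    have hpt : ∀ n : ℕ, y * (bc a n * ((n:ℝ) * y ^ (n - 1))) = bc a n * (n:ℝ) * y ^ n := by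
      intro n
      cases n with
      | zero => simp
      | succ m =>
        rw [Nat.add_sub_cancel, pow_succ]
        push_cast
        ring
    have hT : Summable (fun n : ℕ => bc a n * (n:ℝ) * y ^ n) :=
      (hsum1.mul_left y).congr hpt
    have hident : ∀ n : ℕ, bc a (n+1) * (((n:ℝ) + 1) * y ^ n) =
        a * (bc a n * y ^ n) - bc a n * (n:ℝ) * y ^ n := by
      intro n
      rw [bc_succ]
      have : ((n:ℝ) + 1) ≠ 0 := by positivity
      field_simp
    have hS : S y = a * f y - ∑' n : ℕ, bc a n * (n:ℝ) * y ^ n := by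
      rw [hSdef]
      simp only
      rw [Summable.tsum_eq_zero_add hsum1]
      simp only [Nat.cast_zero, zero_mul, mul_zero, zero_add, Nat.cast_add, Nat.cast_one,
        Nat.add_sub_cancel]
      rw [tsum_congr hident, Summable.tsum_sub (hA.mul_left a) hT, tsum_mul_left]
    have hyS : y * S y = ∑' n : ℕ, bc a n * (n:ℝ) * y ^ n := by
      rw [hSdef]
      simp only
      rw [← tsum_mul_left]
      exact tsum_congr hpt
    have expand : (1 + y) * S y = S y + y * S y := by ring
    rw [expand, hyS, hS]
    ring
  -- zero derivative of the quotient
  set F : ℝ → ℝ := fun z => f z * (1 + z) ^ (-a) with hFdef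
  have hF' : ∀ y ∈ t, HasDerivAt F 0 y := by
    intro y hy
    have h1y : (0:ℝ) < 1 + y := by have := hy.1; simp only [htdef, Set.mem_Ioo] at hy; nlinarith [hr1, hy.1]
    have hpow : HasDerivAt (fun z : ℝ => (1 + z) ^ (-a)) (1 * (-a) * (1 + y) ^ (-a - 1)) y :=
      HasDerivAt.rpow_const ((hasDerivAt_id y).const_add 1) (Or.inl h1y.ne')
    have hmul := (hderiv y hy).mul hpow
    have hval : S y * (1 + y) ^ (-a) + f y * (1 * (-a) * (1 + y) ^ (-a - 1)) = 0 := by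
      have hode := hODE y hy
      have hS : S y = a * f y / (1 + y) := by
        rw [eq_div_iff h1y.ne']; linarith
      rw [hS, show (-a - 1 : ℝ) = -a - 1 from rfl, Real.rpow_sub_one h1y.ne']
      field_simp
      ring
    rw [hval] at hmul
    exact hmul
  have hconst : F v = F 0 := by
    refine (convex_Ioo (-r) r).is_const_of_fderivWithin_eq_zero
      (fun y hy => ((hF' y hy).differentiableAt).differentiableWithinAt) ?_ hv_t h0_t
    intro y hy
    rw [fderivWithin_of_isOpen isOpen_Ioo hy, (hF' y hy).hasFDerivAt.fderiv]
    apply ContinuousLinearMap.ext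
    intro z
    simp
  have hf0 : f 0 = 1 := by
    rw [hfdef]
    simp only
    rw [tsum_eq_single 0 (fun n hn => by simp [zero_pow hn])]
    simp [bc]
  have h1v : (0:ℝ) < 1 + v := by have := (abs_lt.mp hv).1; linarith
  have hfv : f v = (1 + v) ^ a := by
    have h2 : f v * (1 + v) ^ (-a) = 1 := by
      have := hconst
      rw [hFdef] at this
      simp only at this
      rw [this, hf0]
      norm_num
    rwa [Real.rpow_neg h1v.le, mul_inv_eq_one₀ (Real.rpow_pos_of_pos h1v a).ne'] at h2
  rw [← hfv]
  exact (summable_bc a hv).hasSum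

lemma Gamma_ratio_upper {x s : ℝ} (hx : 0 < x) (hs0 : 0 ≤ s) (hs1 : s ≤ 1) :
    Real.Gamma (x + s) ≤ Real.Gamma x * x ^ s := by
  have hΓx := Real.Gamma_pos_of_pos hx
  have hΓxs := Real.Gamma_pos_of_pos (show 0 < x + s by linarith)
  have hcx : x ∈ Set.Ioi (0:ℝ) := hx
  have hcy : x + 1 ∈ Set.Ioi (0:ℝ) := by simp only [Set.mem_Ioi]; linarith
  have key := Real.convexOn_log_Gamma.2 hcx hcy (by linarith : (0:ℝ) ≤ 1 - s) hs0 (by ring)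
  simp only [smul_eq_mul, Function.comp_apply] at key
  rw [show (1 - s) * x + s * (x + 1) = x + s by ring, Real.Gamma_add_one hx.ne',
    Real.log_mul hx.ne' hΓx.ne'] at key
  have hlog : Real.log (Real.Gamma (x + s)) ≤ Real.log (Real.Gamma x) + s * Real.log x := by
    nlinarith [key]
  calc Real.Gamma (x + s) = Real.exp (Real.log (Real.Gamma (x + s))) := (Real.exp_log hΓxs).symm
    _ ≤ Real.exp (Real.log (Real.Gamma x) + s * Real.log x) := Real.exp_le_exp.mpr hlog
    _ = Real.Gamma x * x ^ s := by
        rw [Real.exp_add, Real.exp_log hΓx, Real.rpow_def_of_pos hx, mul_comm (Real.log x) s]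

lemma Gamma_ratio_lower {x s : ℝ} (hx : 0 < x) (hs0 : 0 ≤ s) (hs1 : s ≤ 1) :
    Real.Gamma x * x * (x + s) ^ (s - 1) ≤ Real.Gamma (x + s) := by
  have hΓx := Real.Gamma_pos_of_pos hx
  have hxs : (0:ℝ) < x + s := by linarith
  have hΓxs := Real.Gamma_pos_of_pos hxs
  have hcx : x + s ∈ Set.Ioi (0:ℝ) := hxs
  have hcy : x + s + 1 ∈ Set.Ioi (0:ℝ) := by simp only [Set.mem_Ioi]; linarith
  have key := Real.convexOn_log_Gamma.2 hcx hcy hs0 (by linarith : (0:ℝ) ≤ 1 - s) (by ring)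
  simp only [smul_eq_mul, Function.comp_apply] at key
  rw [show s * (x + s) + (1 - s) * (x + s + 1) = x + 1 by ring,
    Real.Gamma_add_one hx.ne', Real.Gamma_add_one hxs.ne',
    Real.log_mul hx.ne' hΓx.ne', Real.log_mul hxs.ne' hΓxs.ne'] at key
  have hlog : Real.log (Real.Gamma x) + Real.log x + (s - 1) * Real.log (x + s) ≤
      Real.log (Real.Gamma (x + s)) := by nlinarith [key]
  calc Real.Gamma x * x * (x + s) ^ (s - 1)
      = Real.exp (Real.log (Real.Gamma x) + Real.log x + (s - 1) * Real.log (x + s)) := by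
        rw [Real.exp_add, Real.exp_add, Real.exp_log hΓx, Real.exp_log hx,
          Real.rpow_def_of_pos hxs, mul_comm (Real.log (x + s)) (s - 1)]
    _ ≤ Real.Gamma (x + s) := by
        rw [← Real.exp_log hΓxs]
        exact Real.exp_le_exp.mpr hlog

lemma tendsto_shift_div (c : ℝ) : Tendsto (fun x : ℝ => (x + c) / x) atTop (𝓝 1) := by
  have h : Tendsto (fun x : ℝ => 1 + c * x⁻¹) atTop (𝓝 (1 + c * 0)) :=
    tendsto_const_nhds.add (tendsto_const_nhds.mul tendsto_inv_atTop_zero)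
  rw [mul_zero, add_zero] at h
  refine h.congr' ?_
  filter_upwards [eventually_gt_atTop (0:ℝ)] with x hx
  field_simp

lemma tendsto_Gamma_ratio_base {c : ℝ} (h0 : 0 ≤ c) (h1 : c ≤ 1) :
    Tendsto (fun x : ℝ => Real.Gamma (x + c) / (Real.Gamma x * x ^ c)) atTop (𝓝 1) := by
  have hlow : Tendsto (fun x : ℝ => ((x + c) / x) ^ (c - 1)) atTop (𝓝 1) := by
    have hc : ContinuousAt (fun z : ℝ => z ^ (c - 1)) 1 :=
      Real.continuousAt_rpow_const 1 (c - 1) (Or.inl one_ne_zero)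
    have := hc.tendsto.comp (tendsto_shift_div c)
    rwa [Real.one_rpow] at this
  refine tendsto_of_tendsto_of_tendsto_of_le_of_le' hlow tendsto_const_nhds ?_ ?_
  · filter_upwards [eventually_gt_atTop (0:ℝ)] with x hx
    have hxs : (0:ℝ) < x + c := by linarith
    have hΓx := Real.Gamma_pos_of_pos hx
    have hxc : (0:ℝ) < x ^ c := Real.rpow_pos_of_pos hx c
    have hxx : x * x ^ (c - 1) = x ^ c := by
      conv_rhs => rw [show c = (c - 1) + 1 by ring]
      rw [Real.rpow_add_one hx.ne', mul_comm]
    have heq : ((x + c) / x) ^ (c - 1) = Real.Gamma x * x * (x + c) ^ (c - 1) /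
        (Real.Gamma x * x ^ c) := by
      rw [Real.div_rpow hxs.le hx.le,
        div_eq_div_iff (Real.rpow_pos_of_pos hx _).ne' (by positivity), ← hxx]
      ring
    rw [heq]
    exact div_le_div_of_nonneg_right (Gamma_ratio_lower hx h0 h1) (by positivity) |>.trans_eq rfl
  · filter_upwards [eventually_gt_atTop (0:ℝ)] with x hx
    have hΓx := Real.Gamma_pos_of_pos hx
    have hxc : (0:ℝ) < x ^ c := Real.rpow_pos_of_pos hx c
    rw [div_le_one (by positivity)]
    exact Gamma_ratio_upper hx h0 h1

lemma Gamma_R_succ {c x : ℝ} (hx : 0 < x) (hxc : 0 < x + c) :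
    Real.Gamma (x + (c + 1)) / (Real.Gamma x * x ^ (c + 1)) =
      Real.Gamma (x + c) / (Real.Gamma x * x ^ c) * ((x + c) / x) := by
  have hΓx := Real.Gamma_pos_of_pos hx
  have hxcpow := Real.rpow_pos_of_pos hx c
  rw [show x + (c + 1) = (x + c) + 1 by ring, Real.Gamma_add_one hxc.ne',
    Real.rpow_add_one hx.ne']
  field_simp

lemma tendsto_Gamma_ratio_step_up {c : ℝ}
    (h : Tendsto (fun x : ℝ => Real.Gamma (x + c) / (Real.Gamma x * x ^ c)) atTop (𝓝 1)) :
    Tendsto (fun x : ℝ => Real.Gamma (x + (c + 1)) / (Real.Gamma x * x ^ (c + 1)))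
      atTop (𝓝 1) := by
  have h2 := h.mul (tendsto_shift_div c)
  rw [mul_one] at h2
  refine h2.congr' ?_
  filter_upwards [eventually_gt_atTop (0:ℝ), eventually_gt_atTop (-c)] with x hx hxc
  exact (Gamma_R_succ hx (by linarith)).symm

lemma tendsto_Gamma_ratio_step_down {c : ℝ}
    (h : Tendsto (fun x : ℝ => Real.Gamma (x + (c + 1)) / (Real.Gamma x * x ^ (c + 1)))
      atTop (𝓝 1)) :
    Tendsto (fun x : ℝ => Real.Gamma (x + c) / (Real.Gamma x * x ^ c)) atTop (𝓝 1) := by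
  have h2 := h.div (tendsto_shift_div c) one_ne_zero
  rw [div_one] at h2
  refine h2.congr' ?_
  filter_upwards [eventually_gt_atTop (0:ℝ), eventually_gt_atTop (-c)] with x hx hxc
  have hq : (x + c) / x ≠ 0 := div_ne_zero (by linarith) hx.ne'
  show Real.Gamma (x + (c + 1)) / (Real.Gamma x * x ^ (c + 1)) / ((x + c) / x) = _
  rw [Gamma_R_succ hx (by linarith), mul_div_cancel_right₀ _ hq]

lemma tendsto_Gamma_ratio (c : ℝ) :
    Tendsto (fun x : ℝ => Real.Gamma (x + c) / (Real.Gamma x * x ^ c)) atTop (𝓝 1) := by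
  have Gfun : ∀ {e e' : ℝ}, e = e' →
      Tendsto (fun x : ℝ => Real.Gamma (x + e) / (Real.Gamma x * x ^ e)) atTop (𝓝 1) →
      Tendsto (fun x : ℝ => Real.Gamma (x + e') / (Real.Gamma x * x ^ e')) atTop (𝓝 1) :=
    fun h t => h ▸ t
  have key : ∀ (m : ℤ), ∀ d : ℝ, 0 ≤ d → d ≤ 1 →
      Tendsto (fun x : ℝ => Real.Gamma (x + (d + m)) / (Real.Gamma x * x ^ (d + m)))
        atTop (𝓝 1) := by
    intro m
    induction m using Int.induction_on with
    | zero =>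
      intro d h0 h1
      exact Gfun (by push_cast; ring) (tendsto_Gamma_ratio_base h0 h1)
    | succ i ih =>
      intro d h0 h1
      exact Gfun (show (d + (i : ℤ)) + 1 = d + ((i : ℤ) + 1 : ℤ) by push_cast; ring)
        (tendsto_Gamma_ratio_step_up (ih d h0 h1))
    | pred i ih =>
      intro d h0 h1
      refine Gfun (show d + (-(i:ℝ) - 1) = d + ((-(i : ℤ) - 1 : ℤ) : ℝ) by push_cast; ring) ?_
      refine tendsto_Gamma_ratio_step_down ?_
      exact Gfun (show d + (-(i : ℤ) : ℤ) = (d + (-(i:ℝ) - 1)) + 1 by push_cast; ring)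
        (ih d h0 h1)
  exact Gfun (Int.fract_add_floor c) (key ⌊c⌋ (Int.fract c) (Int.fract_nonneg c)
    (Int.fract_lt_one c).le)

lemma tendsto_qq (α β γ : ℝ) (hα0 : 0 < α) (hβ : β < 0) :
    Tendsto (fun k : ℕ =>
      Real.Gamma (1 + γ - ((k:ℝ) + 1) * β) / Real.Gamma (1 + γ + α - (k:ℝ) * β) *
        (Real.Gamma (1 - (k:ℝ) * β) / Real.Gamma (1 - ((k:ℝ) + 1) * β))) atTop (𝓝 0) := by
  set c₁ : ℝ := -β - α with hc₁
  set c₂ : ℝ := -γ - α with hc₂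
  set c₃ : ℝ := -γ - α - β with hc₃
  set X : ℕ → ℝ := fun k => 1 + γ + α - (k:ℝ) * β with hX
  have hx : Tendsto X atTop atTop := by
    have h1 : Tendsto (fun k : ℕ => -β * (k:ℝ)) atTop atTop :=
      Tendsto.const_mul_atTop (neg_pos.mpr hβ) tendsto_natCast_atTop_atTop
    have h2 := tendsto_atTop_add_const_left _ (1 + γ + α) h1
    exact h2.congr (fun k => by rw [hX]; ring)
  have R : ∀ c : ℝ, Tendsto (fun k : ℕ =>
      Real.Gamma (X k + c) / (Real.Gamma (X k) * X k ^ c)) atTop (𝓝 1) :=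
    fun c => (tendsto_Gamma_ratio c).comp hx
  have hrn : Tendsto (fun k : ℕ => X k ^ (-α)) atTop (𝓝 0) :=
    (tendsto_rpow_neg_atTop hα0).comp hx
  have hcomb := (((R c₁).mul (R c₂)).div (R c₃) one_ne_zero).mul hrn
  norm_num at hcomb
  refine hcomb.congr' ?_
  filter_upwards [hx.eventually_ge_atTop (1:ℝ), hx.eventually_ge_atTop (1 - c₁),
    hx.eventually_ge_atTop (1 - c₂), hx.eventually_ge_atTop (1 - c₃)] with k h0 h1 h2 h3
  have hx0 : (0:ℝ) < X k := by linarith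
  have hx1 : (0:ℝ) < X k + c₁ := by linarith
  have hx2 : (0:ℝ) < X k + c₂ := by linarith
  have hx3 : (0:ℝ) < X k + c₃ := by linarith
  have e0 : 1 + γ + α - (k:ℝ) * β = X k := by rw [hX]
  have e1 : 1 + γ - ((k:ℝ) + 1) * β = X k + c₁ := by rw [hX, hc₁]; ring
  have e2 : 1 - (k:ℝ) * β = X k + c₂ := by rw [hX, hc₂]; ring
  have e3 : 1 - ((k:ℝ) + 1) * β = X k + c₃ := by rw [hX, hc₃]; ring
  show Real.Gamma (X k + c₁) / (Real.Gamma (X k) * X k ^ c₁) * (Real.Gamma (X k + c₂) / (Real.Gamma (X k) * X k ^ c₂)) / (Real.Gamma (X k + c₃) / (Real.Gamma (X k) * X k ^ c₃)) * X k ^ (-α) = _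
  have hC := Real.Gamma_pos_of_pos hx0
  have hD := Real.Gamma_pos_of_pos hx3
  have hp1 : (0:ℝ) < X k ^ c₁ := Real.rpow_pos_of_pos hx0 _
  have hp2 : (0:ℝ) < X k ^ c₂ := Real.rpow_pos_of_pos hx0 _
  have hpa : (0:ℝ) < X k ^ α := Real.rpow_pos_of_pos hx0 _
  have hsplit : X k ^ c₃ = X k ^ c₁ * (X k ^ c₂ * X k ^ α) := by
    rw [← Real.rpow_add hx0, ← Real.rpow_add hx0]
    congr 1
    rw [hc₁, hc₂, hc₃]
    ring
  rw [e0, e1, e2, e3, Real.rpow_neg hx0.le, hsplit]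
  field_simp

lemma algA (a m f C E P G : ℝ) (hf : f ≠ 0) (hG : G ≠ 0) :
    a * (m / f) * (C * E / G * P) = m * a / f * (C / G * E * P) := by
  field_simp

lemma prod_neg_shift (a : ℝ) (n : ℕ) :
    ∏ i ∈ range n, (-a - (i:ℝ)) = (-1) ^ n * ∏ i ∈ range n, (a + i) := by
  induction n with
  | zero => simp
  | succ m ih => rw [prod_range_succ, prod_range_succ, ih, pow_succ]; ring

set_option maxHeartbeats 1000000 in
theorem sstfpp_pgf (α β γ ν lam : ℝ) (hα0 : 0 < α) (hα1 : α ≤ 1)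
    (hβ : β < 0) (hν0 : 0 < ν) (hν1 : ν ≤ 1) (hlam : 0 < lam) :
    ∀ (u t : ℝ), |u| < 1 → 0 < t →
      (∑' n : ℕ, u ^ n * pSS α β γ ν lam n t) =
        ∑' k : ℕ, Ccoef α β γ k * (-(lam ^ ν * (1 - u) ^ ν) * t ^ (-β)) ^ k /
          Real.Gamma (1 - (k : ℝ) * β) := by
  intro u t hu ht
  have h1u : 0 < 1 - u := by have := (abs_lt.mp hu).2; linarith
  have hw : 0 < 1 - |u| := by linarith [hu]
  set X : ℝ := lam ^ ν * t ^ (-β) with hXdef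
  have hX : 0 < X := mul_pos (Real.rpow_pos_of_pos hlam ν) (Real.rpow_pos_of_pos ht (-β))
  have hΓk : ∀ k : ℕ, 0 < Real.Gamma (1 - (k:ℝ) * β) := by
    intro k
    apply Real.Gamma_pos_of_pos
    have : 0 ≤ (k:ℝ) * (-β) := mul_nonneg (Nat.cast_nonneg k) (neg_pos.mpr hβ).le
    nlinarith
  set D : ℕ → ℝ := fun k => Ccoef α β γ k / Real.Gamma (1 - (k:ℝ) * β) with hDdef
  set F : ℕ → ℕ → ℝ := fun n k =>
    (-u) ^ n / n.factorial * (D k * (-X) ^ k * ∏ i ∈ range n, ((k:ℝ) * ν - i)) with hFdef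
  have hkν : ∀ k : ℕ, 0 ≤ (k:ℝ) * ν := fun k => mul_nonneg (Nat.cast_nonneg k) hν0.le
  -- Step A
  have stepA : ∀ n : ℕ, u ^ n * pSS α β γ ν lam n t = ∑' k, F n k := by
    intro n
    rw [pSS, ← mul_assoc, ← tsum_mul_left]
    refine tsum_congr fun k => ?_
    rw [hFdef]
    simp only
    rw [gamma_fall ((k:ℝ) * ν) (hkν k) n, neg_mul, ← hXdef, hDdef]
    simp only
    rw [neg_pow u n]
    have hne : Real.Gamma (1 - (k:ℝ) * β) ≠ 0 := (hΓk k).ne'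
    have hfne : (n.factorial : ℝ) ≠ 0 := Nat.cast_ne_zero.mpr n.factorial_ne_zero
    exact algA _ _ _ _ _ _ _ hfne hne
  -- column bound sums
  set Y : ℝ := X * (1 - |u|) ^ (-ν) with hYdef
  have hY : 0 < Y := mul_pos hX (Real.rpow_pos_of_pos hw _)
  set b : ℕ → ℝ := fun k => |D k| * Y ^ k with hbdef
  have hwpow : ∀ k : ℕ, ((1 - |u|) ^ (-ν)) ^ k = (1 - |u|) ^ (-((k:ℝ) * ν)) := by
    intro k
    rw [← Real.rpow_natCast ((1 - |u|) ^ (-ν)) k, ← Real.rpow_mul hw.le]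
    congr 1
    ring
  have hcol : ∀ k : ℕ, HasSum
      (fun n => |u| ^ n / n.factorial * (|D k| * X ^ k * ∏ i ∈ range n, ((k:ℝ) * ν + i)))
      (b k) := by
    intro k
    have h1 := hasSum_binomial (-((k:ℝ) * ν)) (v := -|u|) (by rwa [abs_neg, abs_abs])
    have h2 := h1.mul_left (|D k| * X ^ k)
    have hpt : ∀ n : ℕ, |D k| * X ^ k * (bc (-((k:ℝ) * ν)) n * (-|u|) ^ n) =
        |u| ^ n / n.factorial * (|D k| * X ^ k * ∏ i ∈ range n, ((k:ℝ) * ν + i)) := by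
      intro n
      rw [bc, prod_neg_shift, neg_pow |u| n]
      rw [show ((-1:ℝ)) ^ n * (∏ i ∈ range n, ((k:ℝ) * ν + i)) / n.factorial *
        ((-1:ℝ) ^ n * |u| ^ n) = ((-1:ℝ) * -1) ^ n * ((∏ i ∈ range n, ((k:ℝ) * ν + i)) /
          n.factorial * |u| ^ n) by rw [mul_pow]; ring]
      norm_num
      ring
    have hsum : |D k| * X ^ k * (1 + -|u|) ^ (-((k:ℝ) * ν)) = b k := by
      rw [show (1:ℝ) + -|u| = 1 - |u| by ring, ← hwpow k, mul_assoc, ← mul_pow]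
    rw [← hsum]
    exact (funext hpt : _ = _) ▸ h2
  set qq : ℕ → ℝ := fun k =>
    Real.Gamma (1 + γ - ((k:ℝ) + 1) * β) / Real.Gamma (1 + γ + α - (k:ℝ) * β) *
      (Real.Gamma (1 - (k:ℝ) * β) / Real.Gamma (1 - ((k:ℝ) + 1) * β)) with hqqdef
  have hDsucc : ∀ k : ℕ, D (k + 1) = D k * qq k := by
    intro k
    have h0 : Real.Gamma (1 - (k:ℝ) * β) ≠ 0 := (hΓk k).ne'
    have hcast : ((k + 1 : ℕ) : ℝ) = (k : ℝ) + 1 := by push_cast; ring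
    have h1 : Real.Gamma (1 - ((k:ℝ) + 1) * β) ≠ 0 := by
      have := (hΓk (k + 1)).ne'
      rwa [hcast] at this
    have hCsucc : Ccoef α β γ (k + 1) = Ccoef α β γ k *
        (Real.Gamma (1 + γ - ((k:ℝ) + 1) * β) / Real.Gamma (1 + γ + α - (k:ℝ) * β)) := by
      simp only [Ccoef]
      exact prod_range_succ _ k
    rw [hDdef, hqqdef]
    simp only
    rw [hCsucc, hcast]
    set A : ℝ := Real.Gamma (1 + γ - ((k:ℝ) + 1) * β)
    set Bd : ℝ := Real.Gamma (1 + γ + α - (k:ℝ) * β)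
    field_simp
  have hbnn : ∀ k : ℕ, 0 ≤ b k := fun k => mul_nonneg (abs_nonneg _) (pow_nonneg hY.le _)
  have hqqY : Tendsto (fun k : ℕ => |qq k| * Y) atTop (𝓝 0) := by
    have h1 := (tendsto_qq α β γ hα0 hβ).abs.mul_const Y
    rw [abs_zero, zero_mul] at h1
    exact h1
  have hb : Summable b := by
    refine summable_of_ratio_norm_eventually_le (r := 1/2) (by norm_num) ?_
    filter_upwards [Filter.Tendsto.eventually_le_const (by norm_num : (0:ℝ) < 1/2) hqqY]
      with k hk
    have hbk1 : b (k + 1) = b k * (|qq k| * Y) := by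
      rw [hbdef]
      simp only
      rw [hDsucc k, abs_mul, pow_succ]
      ring
    rw [Real.norm_eq_abs, Real.norm_eq_abs, abs_of_nonneg (hbnn _), abs_of_nonneg (hbnn _),
      hbk1, mul_comm (1/2 : ℝ) (b k)]
    exact mul_le_mul_of_nonneg_left hk (hbnn k)
  set G2 : ℕ × ℕ → ℝ := fun p =>
    |u| ^ p.2 / p.2.factorial * (|D p.1| * X ^ p.1 * ∏ i ∈ range p.2, ((p.1:ℝ) * ν + i))
    with hG2def
  have hG2nonneg : ∀ p : ℕ × ℕ, 0 ≤ G2 p := by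
    intro p
    rw [hG2def]
    simp only
    have h1 : (0:ℝ) ≤ ∏ i ∈ range p.2, ((p.1:ℝ) * ν + i) :=
      prod_nonneg fun i _ => by have := hkν p.1; positivity
    have h2 : (0:ℝ) ≤ X ^ p.1 := pow_nonneg hX.le _
    positivity
  have hG2 : Summable G2 := by
    refine (summable_prod_of_nonneg hG2nonneg).mpr ⟨fun k => (hcol k).summable, ?_⟩
    exact hb.congr fun k => ((hcol k).tsum_eq).symm
  have hFsum : Summable (Function.uncurry fun k n => F n k) := by
    refine Summable.of_norm_bounded hG2 ?_
    rintro ⟨k, n⟩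
    simp only [Function.uncurry]
    rw [hFdef, hG2def]
    simp only
    rw [Real.norm_eq_abs, abs_mul, abs_div, abs_pow, abs_neg, Nat.abs_cast,
      abs_mul, abs_mul, abs_pow, abs_neg, abs_of_pos hX, abs_prod]
    refine mul_le_mul_of_nonneg_left ?_ (by positivity)
    refine mul_le_mul_of_nonneg_left ?_ (by positivity)
    refine prod_le_prod (fun i _ => abs_nonneg _) fun i _ => ?_
    calc |(k:ℝ) * ν - i| ≤ |(k:ℝ) * ν| + |(i:ℝ)| := abs_sub _ _
      _ = (k:ℝ) * ν + i := by rw [abs_of_nonneg (hkν k), Nat.abs_cast]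
  have swap : ∑' n : ℕ, ∑' k : ℕ, F n k = ∑' k : ℕ, ∑' n : ℕ, F n k :=
    Summable.tsum_comm hFsum
  have stepC : ∀ k : ℕ, ∑' n : ℕ, F n k = D k * (-X) ^ k * (1 - u) ^ ((k:ℝ) * ν) := by
    intro k
    have hpt : ∀ n : ℕ, F n k = D k * (-X) ^ k * (bc ((k:ℝ) * ν) n * (-u) ^ n) := by
      intro n
      rw [hFdef, bc]
      simp only
      ring
    rw [tsum_congr hpt, tsum_mul_left,
      (hasSum_binomial ((k:ℝ) * ν) (v := -u) (by rwa [abs_neg])).tsum_eq,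
      show (1:ℝ) + -u = 1 - u by ring]
  have stepD : ∀ k : ℕ, D k * (-X) ^ k * (1 - u) ^ ((k:ℝ) * ν) =
      Ccoef α β γ k * (-(lam ^ ν * (1 - u) ^ ν) * t ^ (-β)) ^ k /
        Real.Gamma (1 - (k:ℝ) * β) := by
    intro k
    have h1 : -(lam ^ ν * (1 - u) ^ ν) * t ^ (-β) = -X * (1 - u) ^ ν := by
      rw [hXdef]; ring
    have h2 : ((1 - u) ^ ν : ℝ) ^ (k:ℕ) = (1 - u) ^ ((k:ℝ) * ν) := by
      rw [← Real.rpow_natCast ((1 - u) ^ ν) k, ← Real.rpow_mul h1u.le]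
      congr 1
      ring
    rw [h1, mul_pow, h2, hDdef]
    simp only
    rw [div_mul_eq_mul_div, div_mul_eq_mul_div, mul_assoc]
  calc ∑' n : ℕ, u ^ n * pSS α β γ ν lam n t = ∑' n : ℕ, ∑' k : ℕ, F n k :=
      tsum_congr stepA
    _ = ∑' k : ℕ, ∑' n : ℕ, F n k := swap
    _ = _ := tsum_congr fun k => (stepC k).trans (stepD k)
end

section
/- Let 0 < α ≤ 1, 0 < ν ≤ 1 and λ > 0. For every real u with |u| < 1 and every t > 0, the probability generating function of the STFPP is a Mittag-Leffler function: Σ_{n=0}^∞ u^n · p^α_ν(n,t) = E_α(-λ^ν (1-u)^ν t^α), where E_α(x) := Σ_{k=0}^∞ x^k / Γ(kα+1). -/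
open Real

/-- State probabilities of the space and time fractional Poisson process (STFPP). -/
noncomputable def pSTF (α ν lam : ℝ) (n : ℕ) (t : ℝ) : ℝ :=
  ((-1) ^ n / n.factorial) * ∑' k : ℕ,
    (-(lam ^ ν) * t ^ α) ^ k / Real.Gamma ((k : ℝ) * α + 1) *
      (Real.Gamma ((k : ℝ) * ν + 1) / Real.Gamma ((k : ℝ) * ν + 1 - n))

/-- Mittag-Leffler function `E_α(x) = Σ_{k=0}^∞ x^k / Γ(kα+1)`. -/
noncomputable def mittagLeffler (α x : ℝ) : ℝ :=
  ∑' k : ℕ, x ^ k / Real.Gamma ((k : ℝ) * α + 1)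

open Filter Finset

noncomputable def dpf (x : ℝ) (n : ℕ) : ℝ := ∏ j ∈ Finset.range n, (x - j)

noncomputable def apf (x : ℝ) (n : ℕ) : ℝ := ∏ j ∈ Finset.range n, (x + j)

lemma dpf_succ (x : ℝ) (n : ℕ) : dpf x (n + 1) = dpf x n * (x - n) := Finset.prod_range_succ _ _

lemma apf_succ (x : ℝ) (n : ℕ) : apf x (n + 1) = apf x n * (x + n) := Finset.prod_range_succ _ _

lemma apf_nonneg {x : ℝ} (hx : 0 ≤ x) (n : ℕ) : 0 ≤ apf x n :=
  Finset.prod_nonneg fun j _ => by positivity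

lemma dpf_neg (x : ℝ) (n : ℕ) : dpf (-x) n = (-1) ^ n * apf x n := by
  rw [dpf, apf]
  rw [show ((-1 : ℝ)) ^ n = ∏ _j ∈ Finset.range n, (-1 : ℝ) by simp]
  rw [← Finset.prod_mul_distrib]
  exact Finset.prod_congr rfl fun j _ => by ring

lemma abs_dpf_le (x : ℝ) (n : ℕ) : |dpf x n| ≤ apf |x| n := by
  rw [dpf, Finset.abs_prod]
  refine Finset.prod_le_prod (fun j _ => abs_nonneg _) fun j _ => ?_
  calc |x - (j : ℝ)| ≤ |x| + |(j : ℝ)| := abs_sub _ _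
    _ = |x| + j := by rw [abs_of_nonneg (by positivity : (0:ℝ) ≤ (j:ℝ))]

/-- master summable series -/
lemma summable_master {x r : ℝ} (hx : 0 ≤ x) (hr0 : 0 ≤ r) (hr1 : r < 1) :
    Summable fun n : ℕ => ((n : ℝ) + 1) * (apf x n / n.factorial) * r ^ n := by
  set f : ℕ → ℝ := fun n => ((n : ℝ) + 1) * (apf x n / n.factorial) * r ^ n with hf
  have hfnn : ∀ n, 0 ≤ f n := fun n => by
    have := apf_nonneg hx n; positivity
  refine summable_of_ratio_norm_eventually_le (r := (1 + r) / 2) (by linarith) ?_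
  have h0 : Tendsto (fun n : ℕ => 1 / ((n : ℝ) + 1)) atTop (nhds 0) :=
    tendsto_one_div_add_atTop_nhds_zero_nat
  have h1 : Tendsto (fun n : ℕ => (1 + 1 / ((n : ℝ) + 1)) * (1 + (x - 1) * (1 / ((n : ℝ) + 1))) * r)
      atTop (nhds r) := by
    have := ((h0.const_add 1).mul ((h0.const_mul (x - 1)).const_add 1)).mul_const r
    simpa using this
  have hev : ∀ᶠ n : ℕ in atTop,
      (1 + 1 / ((n : ℝ) + 1)) * (1 + (x - 1) * (1 / ((n : ℝ) + 1))) * r < (1 + r) / 2 :=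
    h1.eventually_lt_const (by linarith)
  filter_upwards [hev] with n hn
  have hn1 : (0 : ℝ) < (n : ℝ) + 1 := by positivity
  have key : f (n + 1) = f n * ((1 + 1 / ((n : ℝ) + 1)) * (1 + (x - 1) * (1 / ((n : ℝ) + 1))) * r) := by
    rw [hf]
    simp only [apf_succ, Nat.factorial_succ, Nat.cast_succ, Nat.cast_mul]
    field_simp
    ring
  rw [Real.norm_eq_abs, Real.norm_eq_abs, abs_of_nonneg (hfnn _), abs_of_nonneg (hfnn _), key]
  calc f n * ((1 + 1 / ((n : ℝ) + 1)) * (1 + (x - 1) * (1 / ((n : ℝ) + 1))) * r)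
      ≤ f n * ((1 + r) / 2) := by
        refine mul_le_mul_of_nonneg_left hn.le (hfnn n)
    _ = (1 + r) / 2 * f n := by ring

/-- Gamma ratio equals descending factorial. -/
lemma gamma_ratio_eq_dpf {x : ℝ} (hx : 0 ≤ x) (n : ℕ) :
    Real.Gamma (x + 1) / Real.Gamma (x + 1 - n) = dpf x n := by
  induction n with
  | zero =>
      simp [dpf, div_self (Real.Gamma_pos_of_pos (by linarith : (0:ℝ) < x + 1)).ne']
  | succ n ih =>
      have hcast : x + 1 - ((n : ℝ) + 1) = x - n := by ring
      by_cases hz : Real.Gamma (x - n) = 0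
      · obtain ⟨m, hm⟩ := (Real.Gamma_eq_zero_iff _).mp hz
        have hmn : m ≤ n := by
          by_contra h
          push_neg at h
          have : (n : ℝ) + 1 ≤ (m : ℝ) := by exact_mod_cast h
          linarith [hx, hm]
        have hxval : x = ((n - m : ℕ) : ℝ) := by
          rw [Nat.cast_sub hmn]; linarith [hm]
        have hdz : dpf x (n + 1) = 0 := by
          refine Finset.prod_eq_zero (i := n - m) (Finset.mem_range.mpr (by omega)) ?_
          rw [← hxval]; ring
        rw [hdz, Nat.cast_succ, hcast, hz, div_zero]
      · have hxn : x - n ≠ 0 := by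
          intro h; rw [h] at hz; exact hz Real.Gamma_zero
        have hrec : Real.Gamma (x + 1 - n) = (x - n) * Real.Gamma (x - n) := by
          rw [show x + 1 - (n : ℝ) = (x - n) + 1 by ring, Real.Gamma_add_one hxn]
        have hne : Real.Gamma (x + 1 - n) ≠ 0 := by
          rw [hrec]; exact mul_ne_zero hxn hz
        rw [Nat.cast_succ, hcast, dpf_succ, ← ih]
        rw [hrec]
        field_simp

/-- Summability of Mittag-Leffler-type series. -/
lemma summable_ML {α : ℝ} (hα0 : 0 < α) (hα1 : α ≤ 1) (y : ℝ) :
    Summable fun k : ℕ => y ^ k / Real.Gamma ((k : ℝ) * α + 1) := by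
  have gpos : ∀ k : ℕ, 0 < Real.Gamma ((k : ℝ) * α + 1) := fun k =>
    Real.Gamma_pos_of_pos (by positivity)
  have h2pos : (0:ℝ) < (2:ℝ) ^ (α - 1) := Real.rpow_pos_of_pos (by norm_num) _
  have key : ∀ k : ℕ, Real.Gamma ((k : ℝ) * α + 1) * ((k : ℝ) * α + 1) ^ α * 2 ^ (α - 1)
      ≤ Real.Gamma (((k : ℝ) + 1) * α + 1) := by
    intro k
    set z : ℝ := (k : ℝ) * α + 1 with hz
    have hz0 : 0 < z := by positivity
    have hz1 : 1 ≤ z := by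
      rw [hz]; nlinarith [Nat.cast_nonneg (α := ℝ) k]
    have hza : 0 < z + α := by positivity
    have hcv := Real.convexOn_log_Gamma.2 (Set.mem_Ioi.mpr hza)
      (Set.mem_Ioi.mpr (by linarith : (0:ℝ) < z + 1 + α)) (le_of_lt hα0)
      (by linarith : (0:ℝ) ≤ 1 - α) (by ring)
    have hcomb : α • (z + α) + (1 - α) • (z + 1 + α) = z + 1 := by
      simp [smul_eq_mul]; ring
    rw [hcomb] at hcv
    simp only [Function.comp_apply, smul_eq_mul] at hcv
    have hrec : Real.Gamma (z + 1 + α) = (z + α) * Real.Gamma (z + α) := by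
      rw [show z + 1 + α = (z + α) + 1 by ring, Real.Gamma_add_one hza.ne']
    have hGpos : 0 < Real.Gamma (z + α) := Real.Gamma_pos_of_pos hza
    have hG1pos : 0 < Real.Gamma (z + 1) := Real.Gamma_pos_of_pos (by linarith)
    have hlog : Real.log (Real.Gamma (z + 1)) ≤
        Real.log (Real.Gamma (z + α)) + (1 - α) * Real.log (z + α) := by
      have h := hcv
      rw [hrec, Real.log_mul hza.ne' hGpos.ne'] at h
      nlinarith [h]
    have h1 : Real.Gamma (z + 1) ≤ Real.Gamma (z + α) * (z + α) ^ (1 - α) := by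
      have h := Real.exp_le_exp.mpr hlog
      rw [Real.exp_log hG1pos, Real.exp_add, Real.exp_log hGpos] at h
      rwa [Real.rpow_def_of_pos hza, mul_comm (Real.log (z + α)) (1 - α)]
    have hGz : Real.Gamma (z + 1) = z * Real.Gamma z := Real.Gamma_add_one hz0.ne'
    have h2 : (z + α) ^ (1 - α) ≤ 2 ^ (1 - α) * z ^ (1 - α) := by
      rw [← Real.mul_rpow (by norm_num) hz0.le]
      exact Real.rpow_le_rpow hza.le (by linarith) (by linarith)
    have hGz0 : 0 < Real.Gamma z := Real.Gamma_pos_of_pos hz0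
    have h3 : z * Real.Gamma z ≤ Real.Gamma (z + α) * (2 ^ (1 - α) * z ^ (1 - α)) := by
      calc z * Real.Gamma z = Real.Gamma (z + 1) := hGz.symm
        _ ≤ Real.Gamma (z + α) * (z + α) ^ (1 - α) := h1
        _ ≤ Real.Gamma (z + α) * (2 ^ (1 - α) * z ^ (1 - α)) :=
            mul_le_mul_of_nonneg_left h2 hGpos.le
    have e1 : (2:ℝ) ^ (α - 1) * (2:ℝ) ^ (1 - α) = 1 := by
      rw [← Real.rpow_add (by norm_num : (0:ℝ) < 2), show α - 1 + (1 - α) = (0:ℝ) by ring,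
        Real.rpow_zero]
    have e2 : z ^ α * z ^ (1 - α) = z := by
      rw [← Real.rpow_add hz0, show α + (1 - α) = (1:ℝ) by ring, Real.rpow_one]
    have hfin : Real.Gamma z * z ^ α * 2 ^ (α - 1) ≤ Real.Gamma (z + α) := by
      have hd : (0:ℝ) < 2 ^ (1 - α) * z ^ (1 - α) := by positivity
      rw [← mul_le_mul_iff_of_pos_right hd]
      calc Real.Gamma z * z ^ α * 2 ^ (α - 1) * (2 ^ (1 - α) * z ^ (1 - α))
          = (z ^ α * z ^ (1 - α)) * ((2:ℝ) ^ (α - 1) * (2:ℝ) ^ (1 - α)) * Real.Gamma z := by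
            ring
        _ = z * Real.Gamma z := by rw [e1, e2]; ring
        _ ≤ Real.Gamma (z + α) * (2 ^ (1 - α) * z ^ (1 - α)) := h3
    rw [show ((k : ℝ) + 1) * α + 1 = z + α by rw [hz]; ring]
    exact hfin
  refine summable_of_ratio_norm_eventually_le (r := 1/2) (by norm_num) ?_
  have htend : Tendsto (fun k : ℕ => ((k : ℝ) * α + 1) ^ α) atTop atTop := by
    have h1 : Tendsto (fun k : ℕ => (k : ℝ) * α + 1) atTop atTop :=
      tendsto_atTop_add_const_right _ 1
        (Tendsto.atTop_mul_const hα0 tendsto_natCast_atTop_atTop)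
    have := (tendsto_rpow_atTop hα0).comp h1
    exact this
  have hev : ∀ᶠ k : ℕ in atTop, 2 * |y| / 2 ^ (α - 1) ≤ ((k : ℝ) * α + 1) ^ α :=
    htend.eventually_ge_atTop _
  filter_upwards [hev] with k hk
  have gpos1 : 0 < Real.Gamma (((k : ℝ) + 1) * α + 1) := Real.Gamma_pos_of_pos (by positivity)
  have hcast : ((k + 1 : ℕ) : ℝ) = (k : ℝ) + 1 := by push_cast; ring
  have hG1ge : 2 * |y| * Real.Gamma ((k : ℝ) * α + 1) ≤ Real.Gamma (((k : ℝ) + 1) * α + 1) := by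
    have step : 2 * |y| * Real.Gamma ((k : ℝ) * α + 1)
        = (2 * |y| / 2 ^ (α - 1)) * 2 ^ (α - 1) * Real.Gamma ((k : ℝ) * α + 1) := by
      field_simp
    rw [step]
    calc (2 * |y| / 2 ^ (α - 1)) * 2 ^ (α - 1) * Real.Gamma ((k : ℝ) * α + 1)
        ≤ ((k : ℝ) * α + 1) ^ α * 2 ^ (α - 1) * Real.Gamma ((k : ℝ) * α + 1) := by
          exact mul_le_mul_of_nonneg_right
            (mul_le_mul_of_nonneg_right hk h2pos.le) (gpos k).le
      _ = Real.Gamma ((k : ℝ) * α + 1) * ((k : ℝ) * α + 1) ^ α * 2 ^ (α - 1) := by ring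
      _ ≤ Real.Gamma (((k : ℝ) + 1) * α + 1) := key k
  rw [Real.norm_eq_abs, Real.norm_eq_abs, hcast, abs_div, abs_div, abs_pow, abs_pow,
    abs_of_pos (gpos k), abs_of_pos gpos1]
  rcases eq_or_lt_of_le (abs_nonneg y) with hy0 | hy0
  · rw [← hy0, zero_pow (Nat.succ_ne_zero k), zero_div]
    positivity
  · have hden : (0:ℝ) < 2 * |y| * Real.Gamma ((k : ℝ) * α + 1) := by positivity
    calc |y| ^ (k + 1) / Real.Gamma (((k : ℝ) + 1) * α + 1)
        ≤ |y| ^ (k + 1) / (2 * |y| * Real.Gamma ((k : ℝ) * α + 1)) :=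
          div_le_div_of_nonneg_left (by positivity) hden hG1ge
      _ = 1 / 2 * (|y| ^ k / Real.Gamma ((k : ℝ) * α + 1)) := by
          rw [pow_succ]
          field_simp

set_option maxHeartbeats 1000000 in
/-- Generalized binomial series. -/
lemma binom_hasSum (x : ℝ) {v : ℝ} (hv : |v| < 1) :
    HasSum (fun n : ℕ => dpf x n / n.factorial * v ^ n) ((1 + v) ^ x) := by
  classical
  set c : ℕ → ℝ := fun n => dpf x n / n.factorial with hc
  set ρ : ℝ := (|v| + 1) / 2 with hρ
  have hρ0 : 0 < ρ := by positivity
  have hρ1 : ρ < 1 := by rw [hρ]; linarith [abs_nonneg v]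
  have hvρ : |v| < ρ := by rw [hρ]; linarith
  set T : Set ℝ := Set.Ioo (-ρ) ρ with hT
  -- master bound
  have hM : Summable fun n : ℕ => ((n : ℝ) + 1) * (apf |x| n / n.factorial) * ρ ^ n :=
    summable_master (abs_nonneg x) hρ0.le hρ1
  -- bound on terms
  have hterm_bound : ∀ n : ℕ, ∀ w : ℝ, |w| ≤ ρ →
      ‖c n * w ^ n‖ ≤ ((n : ℝ) + 1) * (apf |x| n / n.factorial) * ρ ^ n := by
    intro n w hw
    rw [Real.norm_eq_abs, abs_mul, abs_pow]
    have h1 : |c n| ≤ apf |x| n / n.factorial := by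
      rw [hc]
      simp only [abs_div, Nat.abs_cast]
      exact div_le_div_of_nonneg_right (abs_dpf_le x n) (Nat.cast_pos.mpr n.factorial_pos).le
    have h2 : |w| ^ n ≤ ρ ^ n := pow_le_pow_left₀ (abs_nonneg w) hw n
    calc |c n| * |w| ^ n ≤ (apf |x| n / n.factorial) * ρ ^ n :=
          mul_le_mul h1 h2 (by positivity)
            (div_nonneg (apf_nonneg (abs_nonneg x) n) (Nat.cast_nonneg _))
      _ ≤ ((n : ℝ) + 1) * (apf |x| n / n.factorial) * ρ ^ n := by
          have hnn : (0:ℝ) ≤ apf |x| n / n.factorial * ρ ^ n :=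
            mul_nonneg (div_nonneg (apf_nonneg (abs_nonneg x) n) (Nat.cast_nonneg _))
              (by positivity)
          nlinarith [hnn]
  -- summability of the series at any point of closed ball
  have hsumm : ∀ w : ℝ, |w| ≤ ρ → Summable fun n : ℕ => c n * w ^ n := by
    intro w hw
    exact Summable.of_norm_bounded hM (fun n => hterm_bound n w hw)
  -- derivative bound
  have hderiv_bound : ∀ n : ℕ, ∀ w : ℝ, w ∈ T →
      ‖c n * ((n : ℝ) * w ^ (n - 1))‖ ≤
        (1 / ρ) * (((n : ℝ) + 1) * (apf |x| n / n.factorial) * ρ ^ n) := by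
    intro n w hw
    have hwρ : |w| ≤ ρ := by
      rw [abs_le]; exact ⟨hw.1.le, hw.2.le⟩
    rw [Real.norm_eq_abs, abs_mul, abs_mul, abs_pow, Nat.abs_cast]
    have h1 : |c n| ≤ apf |x| n / n.factorial := by
      rw [hc]
      simp only [abs_div, Nat.abs_cast]
      exact div_le_div_of_nonneg_right (abs_dpf_le x n) (Nat.cast_pos.mpr n.factorial_pos).le
    have hapn : (0:ℝ) ≤ apf |x| n / n.factorial :=
      div_nonneg (apf_nonneg (abs_nonneg x) n) (Nat.cast_nonneg _)
    cases n with
    | zero => simp [apf, hρ0.le]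
    | succ m =>
        have h2 : |w| ^ (m + 1 - 1) ≤ ρ ^ m := by
          simpa using pow_le_pow_left₀ (abs_nonneg w) hwρ m
        have e : (1 / ρ) * (((m : ℝ) + 1 + 1) * (apf |x| (m+1) / (m+1).factorial) * ρ ^ (m+1))
            = ((m : ℝ) + 2) * (apf |x| (m+1) / (m+1).factorial) * ρ ^ m := by
          rw [pow_succ]
          field_simp
          ring
        push_cast
        rw [show ((m : ℝ) + 1 + 1) = (m : ℝ) + 2 by ring] at *
        calc |c (m+1)| * (((m : ℝ) + 1) * |w| ^ (m + 1 - 1))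
            ≤ (apf |x| (m+1) / (m+1).factorial) * (((m : ℝ) + 1) * ρ ^ m) := by
              have : (0:ℝ) ≤ ((m : ℝ) + 1) * ρ ^ m := by positivity
              refine mul_le_mul h1 ?_ (by positivity) hapn
              exact mul_le_mul_of_nonneg_left h2 (by positivity)
          _ ≤ ((m : ℝ) + 2) * (apf |x| (m+1) / (m+1).factorial) * ρ ^ m := by
              have hap : (0:ℝ) ≤ apf |x| (m+1) / (m+1).factorial :=
                div_nonneg (apf_nonneg (abs_nonneg x) (m+1)) (Nat.cast_nonneg _)
              nlinarith [pow_nonneg hρ0.le m]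
          _ = (1 / ρ) * (((m : ℝ) + 2) * (apf |x| (m+1) / (m+1).factorial) * ρ ^ (m+1)) := by
              rw [pow_succ]; field_simp
  -- the sum function and its derivative
  set f : ℝ → ℝ := fun w => ∑' n : ℕ, c n * w ^ n with hfdef
  set D : ℝ → ℝ := fun w => ∑' n : ℕ, c n * ((n : ℝ) * w ^ (n - 1)) with hDdef
  have hTopen : IsOpen T := isOpen_Ioo
  have hTconn : IsPreconnected T := (convex_Ioo _ _).isPreconnected
  have h0T : (0:ℝ) ∈ T := Set.mem_Ioo.mpr ⟨by linarith, hρ0⟩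
  have hg : ∀ n : ℕ, ∀ w : ℝ, HasDerivAt (fun z => c n * z ^ n) (c n * ((n : ℝ) * w ^ (n - 1))) w :=
    fun n w => (hasDerivAt_pow n w).const_mul (c n)
  have hf_deriv : ∀ w ∈ T, HasDerivAt f (D w) w := by
    intro w hw
    exact hasDerivAt_tsum_of_isPreconnected
      (u := fun n : ℕ => (1 / ρ) * (((n : ℝ) + 1) * (apf |x| n / n.factorial) * ρ ^ n))
      (g := fun n z => c n * z ^ n)
      (g' := fun n y => c n * ((n : ℝ) * y ^ (n - 1)))
      (hM.mul_left (1 / ρ)) hTopen hTconn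
      (fun n y _ => hg n y) hderiv_bound h0T
      (hsumm 0 (by simpa using hρ0.le)) hw
  -- summability of derivative series
  have hDsumm : ∀ w ∈ T, Summable fun n : ℕ => c n * ((n : ℝ) * w ^ (n - 1)) := by
    intro w hw
    exact Summable.of_norm_bounded (hM.mul_left (1 / ρ)) (fun n => hderiv_bound n w hw)
  -- the ODE: (1+w) * D w = x * f w on T
  have hODE : ∀ w ∈ T, (1 + w) * D w = x * f w := by
    intro w hw
    have hwρ : |w| ≤ ρ := by rw [abs_le]; exact ⟨hw.1.le, hw.2.le⟩
    have hsf : HasSum (fun n : ℕ => c n * w ^ n) (f w) := (hsumm w hwρ).hasSum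
    have hsD : HasSum (fun n : ℕ => c n * ((n : ℝ) * w ^ (n - 1))) (D w) :=
      (hDsumm w hw).hasSum
    -- key coefficient identity
    have hcoeff : ∀ n : ℕ, c (n + 1) * ((n : ℝ) + 1) = c n * (x - n) := by
      intro n
      rw [hc]
      simp only [dpf_succ, Nat.factorial_succ, Nat.cast_mul, Nat.cast_succ]
      have h1 : ((n : ℝ) + 1) ≠ 0 := by positivity
      have h2 : ((n.factorial : ℝ)) ≠ 0 := Nat.cast_ne_zero.mpr n.factorial_pos.ne'
      field_simp
    -- shifted derivative series: D w = Σ c n (x - n) w^n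
    have hshift : HasSum (fun n : ℕ => c (n+1) * (((n+1 : ℕ) : ℝ) * w ^ ((n+1) - 1))) (D w) := by
      refine (hasSum_nat_add_iff (f := fun n : ℕ => c n * ((n : ℝ) * w ^ (n - 1))) 1).mpr ?_
      have hd0 : (∑ i ∈ Finset.range 1, c i * ((i : ℝ) * w ^ (i - 1))) = 0 := by
        simp
      rwa [hd0, add_zero]
    have hsD1 : HasSum (fun n : ℕ => c n * (x - n) * w ^ n) (D w) := by
      have heq : (fun n : ℕ => c (n+1) * (((n+1 : ℕ) : ℝ) * w ^ ((n+1) - 1)))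
          = fun n : ℕ => c n * (x - n) * w ^ n := by
        funext n
        simp only [Nat.add_sub_cancel, Nat.cast_succ]
        rw [← mul_assoc, hcoeff n]
      rwa [heq] at hshift
    have hsE : HasSum (fun n : ℕ => (n : ℝ) * c n * w ^ n) (D w * w) := by
      have h1 : HasSum (fun n : ℕ => c n * (x - n) * w ^ n * w) (D w * w) := hsD1.mul_right w
      have heq : (fun n : ℕ => ((n+1 : ℕ) : ℝ) * c (n+1) * w ^ (n+1))
          = fun n : ℕ => c n * (x - n) * w ^ n * w := by
        funext n
        simp only [Nat.cast_succ]
        rw [mul_comm ((n : ℝ) + 1) (c (n+1)), hcoeff n, pow_succ]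
        ring
      have h2 : HasSum (fun n : ℕ => ((n+1 : ℕ) : ℝ) * c (n+1) * w ^ (n+1)) (D w * w) := by
        rwa [heq]
      have h3 := (hasSum_nat_add_iff (f := fun n : ℕ => (n : ℝ) * c n * w ^ n) 1).mp h2
      have hd0 : (∑ i ∈ Finset.range 1, (i : ℝ) * c i * w ^ i) = 0 := by simp
      rwa [hd0, add_zero] at h3
    have hsum_add : HasSum (fun n : ℕ => c n * (x - n) * w ^ n + (n : ℝ) * c n * w ^ n)
        (D w + D w * w) := hsD1.add hsE
    have heq2 : (fun n : ℕ => c n * (x - n) * w ^ n + (n : ℝ) * c n * w ^ n)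
        = fun n : ℕ => x * (c n * w ^ n) := by
      funext n; ring
    rw [heq2] at hsum_add
    have := hsum_add.unique (hsf.mul_left x)
    linarith [this]
  -- the function F w = f w * (1+w)^(-x) has zero derivative on T
  set F : ℝ → ℝ := fun w => f w * (1 + w) ^ (-x) with hFdef
  have hFderiv : ∀ w ∈ T, HasDerivAt F 0 w := by
    intro w hw
    obtain ⟨hwl, hwr⟩ := hw
    have hw : w ∈ T := Set.mem_Ioo.mpr ⟨hwl, hwr⟩
    have hw1 : (0:ℝ) < 1 + w := by linarith
    have hrpow : HasDerivAt (fun z : ℝ => (1 + z) ^ (-x)) (1 * (-x) * (1 + w) ^ (-x - 1)) w := by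
      exact ((hasDerivAt_id w).const_add 1).rpow_const (Or.inl hw1.ne')
    have hprod := (hf_deriv w hw).mul hrpow
    have hzero : D w * (1 + w) ^ (-x) + f w * (1 * (-x) * (1 + w) ^ (-x - 1)) = 0 := by
      have hsplit : (1 + w) ^ (-x) = (1 + w) ^ (-x - 1) * (1 + w) := by
        rw [← Real.rpow_add_one hw1.ne' (-x - 1)]
        norm_num
      rw [hsplit]
      linear_combination ((1 + w) ^ (-x - 1)) * (hODE w hw)
    rwa [hzero] at hprod
  -- constancy on the segment [min v 0, max v 0] ⊆ T
  have hminge : -|v| ≤ min v 0 := le_min (neg_abs_le v) (by linarith [abs_nonneg v])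
  have hmaxle : max v 0 ≤ |v| := max_le (le_abs_self v) (abs_nonneg v)
  have hsub : Set.Icc (min v 0) (max v 0) ⊆ T := by
    intro y hy
    simp only [Set.mem_Icc] at hy
    exact Set.mem_Ioo.mpr ⟨by linarith [hy.1], by linarith [hy.2]⟩
  have hconst := constant_of_has_deriv_right_zero
    (f := F) (a := min v 0) (b := max v 0)
    (fun y hy => (hFderiv y (hsub hy)).continuousAt.continuousWithinAt)
    (fun y hy => (hFderiv y (hsub (Set.mem_Icc_of_Ico hy))).hasDerivWithinAt)
  have hFv : F v = F (min v 0) :=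
    hconst v (Set.mem_Icc.mpr ⟨min_le_left _ _, le_max_left _ _⟩)
  have hF0 : F 0 = F (min v 0) :=
    hconst 0 (Set.mem_Icc.mpr ⟨min_le_right _ _, le_max_right _ _⟩)
  -- F 0 = 1
  have hf0 : f 0 = 1 := by
    have h : f 0 = ∑' n : ℕ, c n * (0:ℝ) ^ n := rfl
    rw [h, tsum_eq_single 0 (fun n hn => by simp [zero_pow hn])]
    simp [hc, dpf]
  have hF0val : F 0 = 1 := by
    show f 0 * (1 + (0:ℝ)) ^ (-x) = 1
    rw [hf0]
    norm_num
  -- conclude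
  have hv1 : (0:ℝ) < 1 + v := by
    have := neg_abs_le v
    linarith
  have hfv : f v = (1 + v) ^ x := by
    have h1 : F v = 1 := by rw [hFv, ← hF0, hF0val]
    have h1' : f v * (1 + v) ^ (-x) = 1 := h1
    rw [Real.rpow_neg hv1.le] at h1'
    have h1 := h1'
    have hne : (1 + v) ^ x ≠ 0 := (Real.rpow_pos_of_pos hv1 x).ne'
    field_simp at h1
    linarith [h1]
  have hsum := (hsumm v hvρ.le).hasSum
  have heq : (∑' n : ℕ, c n * v ^ n) = f v := rfl
  rw [heq, hfv] at hsum
  exact hsum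

lemma ap_hasSum (x : ℝ) {r : ℝ} (hr0 : 0 ≤ r) (hr1 : r < 1) :
    HasSum (fun n : ℕ => apf x n / n.factorial * r ^ n) ((1 - r) ^ (-x)) := by
  have h := binom_hasSum (-x) (v := -r) (by rwa [abs_neg, abs_of_nonneg hr0])
  have heq : (fun n : ℕ => dpf (-x) n / n.factorial * (-r) ^ n)
      = fun n : ℕ => apf x n / n.factorial * r ^ n := by
    funext n
    rw [dpf_neg, neg_pow r]
    have h1 : ((-1:ℝ) ^ n) * ((-1:ℝ) ^ n) = 1 := by
      rw [← pow_add, ← two_mul, pow_mul]; norm_num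
    calc (-1:ℝ) ^ n * apf x n / n.factorial * ((-1) ^ n * r ^ n)
        = ((-1:ℝ) ^ n * (-1) ^ n) * (apf x n / n.factorial * r ^ n) := by ring
      _ = apf x n / n.factorial * r ^ n := by rw [h1, one_mul]
  rw [heq, show (1 : ℝ) + -r = 1 - r by ring] at h
  exact h

theorem stfpp_pgf_mittagLeffler (α ν lam : ℝ) (hα0 : 0 < α) (hα1 : α ≤ 1)
    (hν0 : 0 < ν) (hν1 : ν ≤ 1) (hlam : 0 < lam) :
    ∀ (u t : ℝ), |u| < 1 → 0 < t →
      (∑' n : ℕ, u ^ n * pSTF α ν lam n t) =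
        mittagLeffler α (-(lam ^ ν * (1 - u) ^ ν) * t ^ α) := by
  intro u t hu ht
  have h1u : 0 < 1 - u := by linarith [le_abs_self u]
  have h1au : 0 < 1 - |u| := by linarith
  have hau0 : 0 ≤ |u| := abs_nonneg u
  set q : ℝ := lam ^ ν * t ^ α with hq
  have hq0 : 0 < q := mul_pos (Real.rpow_pos_of_pos hlam ν) (Real.rpow_pos_of_pos ht α)
  have gapos : ∀ k : ℕ, 0 < Real.Gamma ((k : ℝ) * α + 1) := fun k =>
    Real.Gamma_pos_of_pos (by positivity)
  have hkν : ∀ k : ℕ, (0:ℝ) ≤ (k : ℝ) * ν := fun k => by positivity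
  set A : ℕ → ℝ := fun k => (-(lam ^ ν) * t ^ α) ^ k / Real.Gamma ((k : ℝ) * α + 1) with hA
  have hAabs : ∀ k, |A k| = q ^ k / Real.Gamma ((k : ℝ) * α + 1) := by
    intro k
    rw [hA]
    rw [abs_div, abs_pow, abs_of_pos (gapos k), abs_mul, abs_neg,
      abs_of_pos (Real.rpow_pos_of_pos hlam ν), abs_of_pos (Real.rpow_pos_of_pos ht α)]
  set term : ℕ → ℕ → ℝ :=
    fun n k => (u ^ n * ((-1) ^ n / n.factorial)) * (A k * dpf ((k : ℝ) * ν) n) with hterm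
  have hpowk : ∀ (w c : ℝ), 0 ≤ w → ∀ k : ℕ, w ^ ((k : ℝ) * c) = (w ^ c) ^ k := by
    intro w c hw k
    rw [mul_comm, Real.rpow_mul hw, Real.rpow_natCast]
  -- step 1
  have step1 : ∀ n : ℕ, u ^ n * pSTF α ν lam n t = ∑' k : ℕ, term n k := by
    intro n
    rw [pSTF]
    have hg : ∀ k : ℕ, (-(lam ^ ν) * t ^ α) ^ k / Real.Gamma ((k : ℝ) * α + 1) *
        (Real.Gamma ((k : ℝ) * ν + 1) / Real.Gamma ((k : ℝ) * ν + 1 - n))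
        = A k * dpf ((k : ℝ) * ν) n := by
      intro k
      rw [gamma_ratio_eq_dpf (hkν k) n, hA]
    rw [tsum_congr hg, hterm]
    simp only
    rw [tsum_mul_left]
    ring
  -- absolute bound
  have habs_le : ∀ k n : ℕ, |term n k| ≤ |A k| * (apf ((k : ℝ) * ν) n / n.factorial * |u| ^ n) := by
    intro k n
    rw [hterm]
    simp only
    simp only [abs_mul, abs_div, abs_pow, abs_neg, abs_one, one_pow, Nat.abs_cast]
    have hd : |dpf ((k : ℝ) * ν) n| ≤ apf ((k : ℝ) * ν) n := by
      have := abs_dpf_le ((k : ℝ) * ν) n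
      rwa [abs_of_nonneg (hkν k)] at this
    have h1 : (0:ℝ) < (n.factorial : ℝ) := Nat.cast_pos.mpr n.factorial_pos
    calc |u| ^ n * (1 / n.factorial) * (|A k| * |dpf ((k : ℝ) * ν) n|)
        ≤ |u| ^ n * (1 / n.factorial) * (|A k| * apf ((k : ℝ) * ν) n) := by
          refine mul_le_mul_of_nonneg_left (mul_le_mul_of_nonneg_left hd (abs_nonneg _)) ?_
          positivity
      _ = |A k| * (apf ((k : ℝ) * ν) n / n.factorial * |u| ^ n) := by ring
  -- summability of bounds
  have hbnd_sum : ∀ k : ℕ, Summable fun n : ℕ => apf ((k : ℝ) * ν) n / n.factorial * |u| ^ n :=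
    fun k => (ap_hasSum ((k : ℝ) * ν) hau0 hu).summable
  have hinner : ∀ k : ℕ, Summable fun n : ℕ => |term n k| := by
    intro k
    exact Summable.of_nonneg_of_le (fun n => abs_nonneg _) (habs_le k)
      ((hbnd_sum k).mul_left _)
  have hinner_tsum : ∀ k : ℕ, (∑' n : ℕ, |term n k|)
      ≤ |A k| * (1 - |u|) ^ (-((k : ℝ) * ν)) := by
    intro k
    calc (∑' n : ℕ, |term n k|)
        ≤ ∑' n : ℕ, |A k| * (apf ((k : ℝ) * ν) n / n.factorial * |u| ^ n) :=
          Summable.tsum_le_tsum (habs_le k) (hinner k) ((hbnd_sum k).mul_left _)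
      _ = |A k| * (1 - |u|) ^ (-((k : ℝ) * ν)) := by
          rw [tsum_mul_left, (ap_hasSum ((k : ℝ) * ν) hau0 hu).tsum_eq]
  have houter : Summable fun k : ℕ => ∑' n : ℕ, |term n k| := by
    refine Summable.of_nonneg_of_le (fun k => tsum_nonneg fun n => abs_nonneg _)
      hinner_tsum ?_
    have heq : (fun k : ℕ => |A k| * (1 - |u|) ^ (-((k : ℝ) * ν)))
        = fun k : ℕ => (q * (1 - |u|) ^ (-ν)) ^ k / Real.Gamma ((k : ℝ) * α + 1) := by
      funext k
      rw [hAabs k, show -((k : ℝ) * ν) = (k : ℝ) * (-ν) by ring,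
        hpowk (1 - |u|) (-ν) h1au.le k, mul_pow]
      ring
    rw [heq]
    exact summable_ML hα0 hα1 _
  -- Fubini
  have hg_sum : Summable (fun p : ℕ × ℕ => |term p.2 p.1|) := by
    refine (summable_prod_of_nonneg (fun p => abs_nonneg _)).mpr ⟨fun k => hinner k, ?_⟩
    exact houter
  have hswap_sum : Summable (fun p : ℕ × ℕ => term p.2 p.1) := by
    rw [← summable_abs_iff]
    exact hg_sum
  have huncurry : Summable (Function.uncurry term) := by
    have := hswap_sum.prod_symm
    exact this
  have hcomm := Summable.tsum_comm (f := term) huncurry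
  -- step 3
  have step3 : ∀ k : ℕ, (∑' n : ℕ, term n k)
      = (-(lam ^ ν * (1 - u) ^ ν) * t ^ α) ^ k / Real.Gamma ((k : ℝ) * α + 1) := by
    intro k
    have heq : (fun n : ℕ => term n k)
        = fun n : ℕ => A k * (dpf ((k : ℝ) * ν) n / n.factorial * (-u) ^ n) := by
      funext n
      rw [hterm]
      simp only
      rw [neg_pow]
      ring
    rw [heq, tsum_mul_left]
    have hb := binom_hasSum ((k : ℝ) * ν) (v := -u) (by rwa [abs_neg])
    rw [show (1 : ℝ) + -u = 1 - u by ring] at hb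
    rw [hb.tsum_eq, hpowk (1 - u) ν h1u.le k, hA]
    rw [div_mul_eq_mul_div, ← mul_pow]
    congr 2
    ring
  calc (∑' n : ℕ, u ^ n * pSTF α ν lam n t)
      = ∑' (n : ℕ) (k : ℕ), term n k := tsum_congr step1
    _ = ∑' (k : ℕ) (n : ℕ), term n k := hcomm.symm
    _ = ∑' k : ℕ, (-(lam ^ ν * (1 - u) ^ ν) * t ^ α) ^ k / Real.Gamma ((k : ℝ) * α + 1) :=
        tsum_congr step3
    _ = mittagLeffler α (-(lam ^ ν * (1 - u) ^ ν) * t ^ α) := rfl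
end

section
/- Let 0 < ν ≤ 1 and λ > 0. For every real u with |u| < 1 and every t > 0, the probability generating function of the SFPP satisfies Σ_{n=0}^∞ u^n · p_ν(n,t) = exp(-λ^ν (1-u)^ν t). -/
open Real Finset

/-- descending factorial product -/
noncomputable def dsc (a : ℝ) (n : ℕ) : ℝ := ∏ i ∈ Finset.range n, (a - i)

/-- generalized binomial coefficient -/
noncomputable def gbc (a : ℝ) (n : ℕ) : ℝ := dsc a n / n.factorial

lemma dsc_succ (a : ℝ) (n : ℕ) : dsc a (n+1) = dsc a n * (a - n) := by
  simp [dsc, Finset.prod_range_succ]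

lemma abs_dsc_le (b : ℝ) (n : ℕ) :
    |dsc b n| ≤ ((⌈|b|⌉₊ + 1).ascFactorial n : ℝ) := by
  induction n with
  | zero => simp [dsc]
  | succ k ih =>
    rw [dsc_succ, abs_mul, Nat.ascFactorial_succ]
    have h1 : |b - k| ≤ ((⌈|b|⌉₊ + 1 : ℕ) : ℝ) + k := by
      have h2 : |b - (k:ℝ)| ≤ |b| + k := by
        calc |b - (k:ℝ)| ≤ |b| + |(k:ℝ)| := abs_sub b k
        _ = |b| + k := by rw [Nat.abs_cast]
      have h3 := Nat.le_ceil |b|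
      push_cast
      push_cast at h3
      linarith
    calc |dsc b k| * |b - k|
        ≤ ((⌈|b|⌉₊ + 1 : ℕ).ascFactorial k : ℝ) * (((⌈|b|⌉₊ + 1 : ℕ) : ℝ) + k) :=
          mul_le_mul ih h1 (abs_nonneg _) (by positivity)
      _ = ((⌈|b|⌉₊ + 1 + k : ℕ) : ℝ) * ((⌈|b|⌉₊ + 1 : ℕ).ascFactorial k : ℝ) := by
          push_cast; ring
      _ = (((⌈|b|⌉₊ + 1 + k) * (⌈|b|⌉₊ + 1).ascFactorial k : ℕ) : ℝ) := by push_cast; ring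

lemma ascFactorial_le (m n : ℕ) (hm : 1 ≤ m) :
    m.ascFactorial n ≤ n.factorial * (m * (n+1)) ^ (m - 1) := by
  rw [Nat.ascFactorial_eq_factorial_mul_choose']
  have h1 : (m + n - 1).choose n = (m + n - 1).choose (m - 1) := by
    rw [← Nat.choose_symm (by omega : n ≤ m + n - 1)]
    congr 1; omega
  apply Nat.mul_le_mul_left
  rw [h1]
  calc (m + n - 1).choose (m-1) ≤ (m + n - 1) ^ (m-1) := Nat.choose_le_pow _ _
    _ ≤ (m * (n+1)) ^ (m-1) := by
        apply Nat.pow_le_pow_left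
        have hn : n ≤ m * n := Nat.le_mul_of_pos_left n (by omega)
        have : m * (n+1) = m * n + m := by ring
        omega

lemma summable_poly_geom (M : ℕ) {r : ℝ} (hr : |r| < 1) :
    Summable (fun n : ℕ => ((n:ℝ)+1) ^ M * |r| ^ n) := by
  have hr' : ‖|r|‖ < 1 := by rwa [Real.norm_eq_abs, abs_abs]
  have key : ∀ n : ℕ, ((n:ℝ)+1) ^ M * |r| ^ n
      = ∑ j ∈ Finset.range (M+1), (M.choose j : ℝ) * ((n:ℝ) ^ j * |r| ^ n) := by
    intro n
    rw [add_pow, Finset.sum_mul]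
    apply Finset.sum_congr rfl
    intro j _
    simp only [one_pow, mul_one]
    ring
  rw [funext key]
  apply summable_sum
  intro j _
  exact (summable_pow_mul_geometric_of_norm_lt_one j hr').mul_left _

/-- central summability lemma -/
lemma summable_main (b r : ℝ) (hr : |r| < 1) :
    Summable (fun n : ℕ => ((n:ℝ)+1) * (|dsc b n| / n.factorial) * |r| ^ n) := by
  set m := ⌈|b|⌉₊ + 1 with hm
  have hg : Summable (fun n : ℕ => ((m:ℝ) * m ^ (m-1)) * (((n:ℝ)+1) ^ m * |r| ^ n)) :=
    (summable_poly_geom m hr).mul_left _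
  refine Summable.of_nonneg_of_le (fun n => by positivity) (fun n => ?_) hg
  have h1 : |dsc b n| / n.factorial ≤ ((m * (n+1)) ^ (m - 1) : ℕ) := by
    rw [div_le_iff₀ (by positivity)]
    calc |dsc b n| ≤ (m.ascFactorial n : ℝ) := abs_dsc_le b n
      _ ≤ ((n.factorial * (m * (n+1)) ^ (m - 1) : ℕ) : ℝ) := by
          exact_mod_cast ascFactorial_le m n (by omega)
      _ = ((m * (n+1)) ^ (m - 1) : ℕ) * n.factorial := by push_cast; ring
  have h2 : (((m * (n+1)) ^ (m - 1) : ℕ) : ℝ) ≤ (m:ℝ)^(m-1) * ((n:ℝ)+1)^(m-1) := by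
    push_cast; rw [← mul_pow]
  have h3 : ((n:ℝ)+1) * (|dsc b n| / n.factorial) ≤ ((n:ℝ)+1) * ((m:ℝ)^(m-1) * ((n:ℝ)+1)^(m-1)) :=
    mul_le_mul_of_nonneg_left (h1.trans h2) (by positivity)
  have hp : ((n:ℝ)+1)^(m-1) * ((n:ℝ)+1) = ((n:ℝ)+1)^m := by
    have hm1 : m - 1 + 1 = m := by omega
    rw [← pow_succ, hm1]
  have h4 : (m:ℝ)^(m-1) ≤ (m:ℝ) * m^(m-1) := by
    nlinarith [pow_nonneg (by positivity : (0:ℝ) ≤ (m:ℝ)) (m-1),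
      (by exact_mod_cast Nat.succ_le_of_lt (by omega) : (1:ℝ) ≤ (m:ℝ))]
  calc ((n:ℝ)+1) * (|dsc b n| / n.factorial) * |r| ^ n
      ≤ ((n:ℝ)+1) * ((m:ℝ)^(m-1) * ((n:ℝ)+1)^(m-1)) * |r|^n :=
        mul_le_mul_of_nonneg_right h3 (by positivity)
    _ = ((m:ℝ)^(m-1)) * (((n:ℝ)+1)^m * |r|^n) := by rw [← hp]; ring
    _ ≤ ((m:ℝ) * m ^ (m-1)) * (((n:ℝ)+1) ^ m * |r| ^ n) :=
        mul_le_mul_of_nonneg_right h4 (by positivity)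
lemma gamma_factor (x : ℝ) (n : ℕ) (h : ∀ m : ℕ, (m:ℝ) = x → n ≤ m) :
    Real.Gamma (x+1) = dsc x n * Real.Gamma (x+1-n) := by
  induction n with
  | zero => simp [dsc]
  | succ k ih =>
    have hk : ∀ m : ℕ, (m:ℝ) = x → k ≤ m := fun m hm => by have := h m hm; omega
    have hxk : x - k ≠ 0 := by
      intro h0
      have hx : (k:ℝ) = x := by linarith
      have := h k hx
      omega
    rw [ih hk, dsc_succ]
    have e1 : x + 1 - (k:ℝ) = (x - k) + 1 := by ring
    have e2 : x - (k:ℝ) = x + 1 - ((k:ℕ)+1 : ℕ) := by push_cast; ring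
    rw [e1, Real.Gamma_add_one hxk, ← e2]
    ring

lemma gamma_ratio (x : ℝ) (hx : 0 ≤ x) (n : ℕ) :
    Real.Gamma (x+1) / Real.Gamma (x+1-n) = dsc x n := by
  by_cases h : ∃ m : ℕ, (m:ℝ) = x ∧ m < n
  · obtain ⟨m, hmx, hmn⟩ := h
    have hz : Real.Gamma (x+1-n) = 0 := by
      have : x + 1 - (n:ℝ) = -((n - (m+1) : ℕ) : ℝ) := by
        rw [← hmx]
        rw [Nat.cast_sub (by omega : m + 1 ≤ n)]
        push_cast; ring
      rw [this, Real.Gamma_neg_nat_eq_zero]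
    have hp : dsc x n = 0 := by
      apply Finset.prod_eq_zero (Finset.mem_range.2 hmn)
      rw [← hmx]; ring
    rw [hz, hp, div_zero]
  · push_neg at h
    have h' : ∀ m : ℕ, (m:ℝ) = x → n ≤ m := h
    have hne : Real.Gamma (x+1-n) ≠ 0 := by
      apply Real.Gamma_ne_zero
      intro m hm
      have hmn : m + 1 ≤ n := by
        by_contra hc
        push_neg at hc
        have : (n:ℝ) ≤ (m:ℝ) := by exact_mod_cast by omega
        have h1 : x + 1 - (n:ℝ) = -(m:ℝ) := hm
        linarith
      have hx' : x = ((n - (m+1) : ℕ) : ℝ) := by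
        have h1 : x + 1 - (n:ℝ) = -(m:ℝ) := hm
        rw [Nat.cast_sub hmn]
        push_cast
        linarith
      have := h' _ hx'.symm
      omega
    rw [gamma_factor x n h', mul_div_assoc, div_self hne, mul_one]
lemma abs_gbc_term (a y : ℝ) (n : ℕ) :
    ‖gbc a n * y ^ n‖ = (|dsc a n| / n.factorial) * |y| ^ n := by
  rw [Real.norm_eq_abs, abs_mul, abs_pow, gbc, abs_div, Nat.abs_cast]

lemma summable_gbc (a : ℝ) {y : ℝ} (hy : |y| < 1) :
    Summable (fun n : ℕ => gbc a n * y ^ n) := by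
  apply Summable.of_norm_bounded (summable_main a y hy)
  intro n
  rw [abs_gbc_term]
  have h1 : (1:ℝ) ≤ (n:ℝ) + 1 := by
    have : (0:ℝ) ≤ (n:ℝ) := Nat.cast_nonneg n
    linarith
  have h2 : (0:ℝ) ≤ (|dsc a n| / n.factorial) * |y| ^ n := by positivity
  nlinarith

lemma summable_gbc_mul (c : ℝ) (a : ℝ) {y : ℝ} (hy : |y| < 1)
    (w : ℕ → ℝ) (hw : ∀ n, |w n| ≤ c * ((n:ℝ) + 1)) :
    Summable (fun n : ℕ => w n * (gbc a n * y ^ n)) := by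
  apply Summable.of_norm_bounded ((summable_main a y hy).mul_left c)
  intro n
  rw [norm_mul, abs_gbc_term]
  have h2 : (0:ℝ) ≤ (|dsc a n| / n.factorial) * |y| ^ n := by positivity
  have h3 := hw n
  have h4 : (0:ℝ) ≤ |w n| := abs_nonneg _
  calc ‖w n‖ * ((|dsc a n| / n.factorial) * |y| ^ n)
      ≤ (c * ((n:ℝ)+1)) * ((|dsc a n| / n.factorial) * |y| ^ n) := by
        apply mul_le_mul_of_nonneg_right _ h2
        exact h3
    _ = c * (((n:ℝ)+1) * (|dsc a n| / n.factorial) * |y| ^ n) := by ring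

lemma gbc_succ_mul (a : ℝ) (n : ℕ) :
    gbc a (n+1) * ((n:ℝ)+1) = gbc a n * (a - n) := by
  rw [gbc, gbc, dsc_succ, Nat.factorial_succ]
  have h1 : ((n+1).factorial : ℝ) ≠ 0 := by positivity
  push_cast
  field_simp

/-- The generalized binomial series. -/
theorem binomial_hasSum (a : ℝ) {x : ℝ} (hx : |x| < 1) :
    HasSum (fun n : ℕ => gbc a n * x ^ n) ((1+x) ^ a) := by
  -- setup
  set R : ℝ := (1 + |x|) / 2 with hR
  have hxR : |x| < R := by rw [hR]; linarith [abs_nonneg x]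
  have hR0 : 0 < R := by rw [hR]; linarith [abs_nonneg x]
  have hR1 : R < 1 := by rw [hR]; linarith
  have hRabs : |R| = R := abs_of_pos hR0
  set s : Set ℝ := Metric.ball (0:ℝ) R with hs
  have hmem : ∀ y ∈ s, |y| < R := by
    intro y hy
    have h : dist y 0 < R := hy
    rwa [Real.dist_eq, sub_zero] at h
  have hpos : ∀ y ∈ s, (0:ℝ) < 1 + y := by
    intro y hy
    have := hmem y hy
    have := abs_lt.1 this
    linarith
  -- the series and its term-wise derivative
  set g : ℕ → ℝ → ℝ := fun n y => gbc a n * y ^ n with hg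
  set g' : ℕ → ℝ → ℝ := fun n y => gbc a n * ((n:ℝ) * y ^ (n-1)) with hg'
  set u : ℕ → ℝ := fun n => (((n:ℝ)+1) * (|dsc a n| / n.factorial) * R ^ n) / R with hu
  have hu_sum : Summable u := by
    have := (summable_main a R (by rwa [hRabs])).div_const R
    simpa [hRabs] using this
  have hderiv : ∀ n y, y ∈ s → HasDerivAt (g n) (g' n y) y := by
    intro n y _
    simpa [hg, hg', mul_comm] using (hasDerivAt_pow n y).const_mul (gbc a n)
  have hbound : ∀ n y, y ∈ s → ‖g' n y‖ ≤ u n := by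
    intro n y hy
    rcases n with _ | m
    · simp [hg', hu]
      positivity
    · have hyR := hmem y hy
      have : ‖g' (m+1) y‖ = (|dsc a (m+1)| / (m+1).factorial) * (((m:ℝ)+1) * |y| ^ m) := by
        simp only [hg', Real.norm_eq_abs, abs_mul, abs_pow, gbc, abs_div, Nat.abs_cast]
        push_cast
        ring
      rw [this]
      show _ ≤ (((m+1:ℕ):ℝ)+1) * (|dsc a (m+1)| / ((m+1).factorial:ℝ)) * R ^ (m+1) / R
      have hym : |y| ^ m ≤ R ^ m := by
        apply pow_le_pow_left₀ (abs_nonneg y) hyR.le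
      have e1 : (((m+1:ℕ):ℝ)+1) * (|dsc a (m+1)| / (m+1).factorial) * R ^ (m+1) / R
          = (((m:ℝ)+2) * (|dsc a (m+1)| / (m+1).factorial)) * R ^ m := by
        rw [pow_succ]
        push_cast
        field_simp
        ring
      rw [e1]
      have h2 : (0:ℝ) ≤ |dsc a (m+1)| / (m+1).factorial := by positivity
      calc |dsc a (m+1)| / ((m+1).factorial:ℝ) * (((m:ℝ)+1) * |y| ^ m)
          ≤ |dsc a (m+1)| / ((m+1).factorial:ℝ) * (((m:ℝ)+1) * R ^ m) := by
            apply mul_le_mul_of_nonneg_left _ h2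
            exact mul_le_mul_of_nonneg_left hym (by positivity)
        _ ≤ ((m:ℝ)+2) * (|dsc a (m+1)| / ((m+1).factorial:ℝ)) * R ^ m := by
            nlinarith [mul_nonneg h2 (pow_nonneg hR0.le m)]
  have h0s : (0:ℝ) ∈ s := Metric.mem_ball_self hR0
  have hg0 : Summable fun n => g n 0 := summable_gbc a (by simpa using zero_lt_one)
  -- derivative of the sum
  have key : ∀ y ∈ s, HasDerivAt (fun z => ∑' n, g n z) (∑' n, g' n y) y := by
    intro y hy
    exact hasDerivAt_tsum_of_isPreconnected hu_sum Metric.isOpen_ball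
      (convex_ball 0 R).isPreconnected hderiv hbound h0s hg0 hy
  -- the ODE: (1+y) * D y = a * f y
  have hode : ∀ y ∈ s, (1 + y) * (∑' n, g' n y) = a * (∑' n, g n y) := by
    intro y hy
    have hyR := hmem y hy
    have hy1 : |y| < 1 := lt_trans hyR hR1
    have hsumg : Summable fun n => g n y := summable_gbc a hy1
    have hsA : Summable (fun n : ℕ => (a - n) * (gbc a n * y ^ n)) := by
      apply summable_gbc_mul (|a| + 1) a hy1
      intro n
      have : |a - (n:ℝ)| ≤ |a| + n := by
        calc |a - (n:ℝ)| ≤ |a| + |(n:ℝ)| := abs_sub a n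
          _ = |a| + n := by rw [Nat.abs_cast]
      have h1 : (0:ℝ) ≤ |a| := abs_nonneg a
      have h2 : (0:ℝ) ≤ (n:ℝ) := Nat.cast_nonneg n
      nlinarith
    have hsB : Summable (fun n : ℕ => (n:ℝ) * (gbc a n * y ^ n)) := by
      apply summable_gbc_mul 1 a hy1
      intro n
      rw [abs_of_nonneg (Nat.cast_nonneg n), one_mul]
      linarith
    have hsD : Summable (fun n => g' n y) := by
      apply Summable.of_norm_bounded hu_sum
      intro n
      exact hbound n y hy
    -- step 1 : D y = ∑' n, (a - n) * (gbc a n * y^n)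
    have hshift : (∑' n, g' n y) = ∑' n : ℕ, (a - n) * (gbc a n * y ^ n) := by
      rw [Summable.tsum_eq_zero_add hsD]
      have hz : g' 0 y = 0 := by simp [hg']
      rw [hz, zero_add]
      apply tsum_congr
      intro n
      show gbc a (n+1) * (((n+1:ℕ):ℝ) * y ^ n) = (a - n) * (gbc a n * y ^ n)
      have hgs := gbc_succ_mul a n
      push_cast
      linear_combination (y ^ n) * hgs
    -- step 2 : y * D y = ∑' n, n * (gbc a n * y^n)
    have hyD : y * (∑' n, g' n y) = ∑' n : ℕ, (n:ℝ) * (gbc a n * y ^ n) := by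
      rw [← tsum_mul_left]
      apply tsum_congr
      intro n
      rcases n with _ | m
      · simp [hg']
      · show y * (gbc a (m+1) * (((m+1:ℕ):ℝ) * y ^ m)) = ((m+1:ℕ):ℝ) * (gbc a (m+1) * y ^ (m+1))
        rw [pow_succ]
        ring
    calc (1 + y) * (∑' n, g' n y) = (∑' n, g' n y) + y * (∑' n, g' n y) := by ring
      _ = (∑' n : ℕ, (a - n) * (gbc a n * y ^ n)) + (∑' n : ℕ, (n:ℝ) * (gbc a n * y ^ n)) := by
          rw [hyD, hshift]
      _ = ∑' n : ℕ, ((a - n) * (gbc a n * y ^ n) + (n:ℝ) * (gbc a n * y ^ n)) :=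
          (Summable.tsum_add hsA hsB).symm
      _ = ∑' n : ℕ, a * (gbc a n * y ^ n) := by
          apply tsum_congr; intro n; ring
      _ = a * ∑' n, g n y := by rw [tsum_mul_left]
  -- h y := f y * (1+y)^(-a) has zero derivative on s
  have hconst : ∀ y ∈ s, HasDerivAt (fun z => (∑' n, g n z) * (1+z) ^ (-a)) 0 y := by
    intro y hy
    have h1y : (0:ℝ) < 1 + y := hpos y hy
    have hd1 := key y hy
    have hd2 : HasDerivAt (fun z : ℝ => (1+z) ^ (-a)) (-a * (1+y) ^ (-a-1)) y := by
      have hbase : HasDerivAt (fun z : ℝ => 1 + z) 1 y := by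
        simpa using (hasDerivAt_id y).const_add (1:ℝ)
      have := (Real.hasDerivAt_rpow_const (x := 1+y) (p := -a) (Or.inl h1y.ne')).comp y hbase
      simp only [mul_one] at this
      exact this
    have := hd1.mul hd2
    refine this.congr_deriv ?_
    have hsplit : (1+y) ^ (-a) = (1+y) ^ (-a-1) * (1+y) := by
      have h := Real.rpow_add h1y (-a-1) 1
      rw [Real.rpow_one] at h
      calc (1+y) ^ (-a) = (1+y) ^ (-a-1+1) := by norm_num
        _ = (1+y) ^ (-a-1) * (1+y) := h
    have hode' := hode y hy
    rw [hsplit]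
    linear_combination ((1+y) ^ (-a-1)) * hode' 
  -- constancy on the ball
  have hval : (∑' n, g n x) * (1+x) ^ (-a) = 1 := by
    have hxs : x ∈ s := by
      show dist x 0 < R
      rw [Real.dist_eq, sub_zero]
      exact hxR
    have hb := (convex_ball (0:ℝ) R).norm_image_sub_le_of_norm_hasDerivWithin_le
      (f := fun z => (∑' n, g n z) * (1+z) ^ (-a)) (C := 0)
      (fun y hy => (hconst y hy).hasDerivWithinAt) (fun y hy => by simp) h0s hxs
    rw [zero_mul] at hb
    have hz := norm_le_zero_iff.1 hb
    have heq : (∑' n, g n x) * (1+x) ^ (-a) = (∑' n, g n 0) * (1+(0:ℝ)) ^ (-a) :=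
      sub_eq_zero.1 hz
    rw [heq]
    have hf0 : (∑' n, g n 0) = 1 := by
      rw [tsum_eq_single 0]
      · simp [hg, gbc, dsc]
      · intro n hn
        simp [hg, zero_pow hn]
    rw [hf0, one_mul]
    norm_num
  -- conclude
  have hxs : |x| < 1 := hx
  have h1x : (0:ℝ) < 1 + x := by have := abs_lt.1 hx; linarith
  have hrpow_pos : (0:ℝ) < (1+x) ^ a := Real.rpow_pos_of_pos h1x a
  have hfx : (∑' n, g n x) = (1+x) ^ a := by
    have hneg : (1+x) ^ (-a) = ((1+x) ^ a)⁻¹ := Real.rpow_neg h1x.le a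
    rw [hneg] at hval
    field_simp at hval
    linarith [hval]
  have := (summable_gbc a hx).hasSum
  rw [show (fun n : ℕ => gbc a n * x ^ n) = fun n => g n x from rfl] at this ⊢
  rwa [hfx] at this

/-- State probabilities of the space fractional Poisson process (SFPP). -/
noncomputable def pSF (ν lam : ℝ) (n : ℕ) (t : ℝ) : ℝ :=
  ((-1) ^ n / n.factorial) * ∑' k : ℕ,
    (-(lam ^ ν) * t) ^ k / k.factorial *
      (Real.Gamma ((k : ℝ) * ν + 1) / Real.Gamma ((k : ℝ) * ν + 1 - n))

noncomputable def ascP (b : ℝ) (n : ℕ) : ℝ := ∏ i ∈ Finset.range n, (b + i)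

lemma ascP_nonneg {b : ℝ} (hb : 0 ≤ b) (n : ℕ) : 0 ≤ ascP b n := by
  apply Finset.prod_nonneg
  intro i _
  positivity

lemma dsc_neg (b : ℝ) (n : ℕ) : dsc (-b) n = (-1) ^ n * ascP b n := by
  induction n with
  | zero => simp [dsc, ascP]
  | succ k ih =>
    rw [dsc_succ, ih,
      show ascP b (k+1) = ascP b k * (b + k) from by rw [ascP, ascP, Finset.prod_range_succ]]
    ring

lemma abs_dsc_le_ascP {b : ℝ} (hb : 0 ≤ b) (n : ℕ) : |dsc b n| ≤ ascP b n := by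
  induction n with
  | zero => simp [dsc, ascP]
  | succ k ih =>
    rw [dsc_succ, abs_mul, ascP, Finset.prod_range_succ]
    show _ ≤ ascP b k * (b + k)
    apply mul_le_mul ih _ (abs_nonneg _) (ascP_nonneg hb k)
    have h1 : |b - (k:ℝ)| ≤ |b| + |(k:ℝ)| := abs_sub b k
    rw [abs_of_nonneg hb, Nat.abs_cast] at h1
    exact h1

lemma hasSum_ascP (b : ℝ) {q : ℝ} (hq0 : 0 ≤ q) (hq1 : q < 1) :
    HasSum (fun n : ℕ => ascP b n / n.factorial * q ^ n) ((1 - q) ^ (-b)) := by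
  have hq : |(-q)| < 1 := by rw [abs_neg, abs_of_nonneg hq0]; exact hq1
  have h := binomial_hasSum (-b) hq
  have he : ∀ n : ℕ, gbc (-b) n * (-q) ^ n = ascP b n / n.factorial * q ^ n := by
    intro n
    rw [gbc, dsc_neg, neg_pow q n]
    have h2 : ((-1:ℝ)) ^ n * ((-1:ℝ)) ^ n = 1 := by
      rw [← mul_pow]; norm_num
    calc (-1:ℝ) ^ n * ascP b n / n.factorial * ((-1) ^ n * q ^ n)
        = ((-1:ℝ)) ^ n * ((-1:ℝ)) ^ n * (ascP b n / n.factorial * q ^ n) := by ring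
      _ = ascP b n / n.factorial * q ^ n := by rw [h2, one_mul]
  rw [funext he] at h
  have : (1 + -q) = 1 - q := by ring
  rwa [this] at h

theorem sfpp_pgf_exp (ν lam : ℝ) (hν0 : 0 < ν) (hν1 : ν ≤ 1) (hlam : 0 < lam) :
    ∀ (u t : ℝ), |u| < 1 → 0 < t →
      (∑' n : ℕ, u ^ n * pSF ν lam n t) = Real.exp (-(lam ^ ν * (1 - u) ^ ν) * t) := by
  intro u t hu ht
  have hu' := abs_lt.1 hu
  have h1u : (0:ℝ) < 1 - u := by linarith
  have h1au : (0:ℝ) < 1 - |u| := by linarith [abs_nonneg u, hu]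
  set A : ℕ → ℝ := fun k => (-(lam ^ ν) * t) ^ k / k.factorial with hA
  set F : ℕ × ℕ → ℝ := fun p => A p.1 * (gbc ((p.1 : ℝ) * ν) p.2 * (-u) ^ p.2) with hF
  -- summability of F
  have hFsum : Summable F := by
    apply Summable.of_norm
    set G : ℕ × ℕ → ℝ := fun p =>
      |A p.1| * (ascP ((p.1 : ℝ) * ν) p.2 / p.2.factorial * |u| ^ p.2) with hG
    have hGnonneg : ∀ p, 0 ≤ G p := by
      intro p
      have h1 : (0:ℝ) ≤ (p.1 : ℝ) * ν := by positivity
      have := ascP_nonneg h1 p.2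
      positivity
    have hGslice : ∀ k : ℕ, HasSum (fun n => G (k, n)) (|A k| * (1 - |u|) ^ (-((k:ℝ) * ν))) := by
      intro k
      exact (hasSum_ascP ((k:ℝ) * ν) (abs_nonneg u) hu).mul_left _
    have hGrow : Summable (fun k : ℕ => |A k| * (1 - |u|) ^ (-((k:ℝ) * ν))) := by
      have key : ∀ k : ℕ, |A k| * (1 - |u|) ^ (-((k:ℝ) * ν))
          = (lam ^ ν * t * (1 - |u|) ^ (-ν)) ^ k / k.factorial := by
        intro k
        have e1 : |A k| = (lam ^ ν * t) ^ k / k.factorial := by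
          rw [hA]
          simp only [abs_div, abs_pow, Nat.abs_cast]
          congr 1
          · congr 1
            have hlt : (0:ℝ) < lam ^ ν := Real.rpow_pos_of_pos hlam ν
            rw [abs_of_nonpos (by nlinarith : -(lam^ν) * t ≤ 0)]
            ring
        have e2 : (1 - |u|) ^ (-((k:ℝ) * ν)) = ((1 - |u|) ^ (-ν)) ^ k := by
          rw [show -((k:ℝ) * ν) = -ν * (k:ℝ) by ring, Real.rpow_mul h1au.le,
            Real.rpow_natCast]
        rw [e1, e2, mul_pow]
        ring
      rw [funext key]
      exact Real.summable_pow_div_factorial _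
    have hGsum : Summable G := by
      rw [summable_prod_of_nonneg hGnonneg]
      exact ⟨fun k => (hGslice k).summable, by
        have : (fun k : ℕ => ∑' n, G (k, n)) = fun k => |A k| * (1 - |u|) ^ (-((k:ℝ) * ν)) := by
          funext k
          exact (hGslice k).tsum_eq
        rw [this]
        exact hGrow⟩
    refine Summable.of_nonneg_of_le (fun p => norm_nonneg _) (fun p => ?_) hGsum
    obtain ⟨k, n⟩ := p
    show ‖A k * (gbc ((k:ℝ) * ν) n * (-u) ^ n)‖ ≤ G (k, n)
    have hb : (0:ℝ) ≤ (k:ℝ) * ν := by positivity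
    rw [Real.norm_eq_abs, abs_mul, abs_mul, abs_pow, abs_neg]
    apply mul_le_mul_of_nonneg_left _ (abs_nonneg _)
    apply mul_le_mul_of_nonneg_right _ (pow_nonneg (abs_nonneg u) n)
    rw [gbc, abs_div, Nat.abs_cast]
    gcongr
    exact abs_dsc_le_ascP hb n
  -- rewrite each term of the outer sum
  have hterm : ∀ n : ℕ, u ^ n * pSF ν lam n t = ∑' k : ℕ, F (k, n) := by
    intro n
    rw [pSF, ← mul_assoc, ← tsum_mul_left]
    apply tsum_congr
    intro k
    have hb : (0:ℝ) ≤ (k:ℝ) * ν := by positivity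
    rw [gamma_ratio _ hb n]
    show u ^ n * ((-1) ^ n / n.factorial) * ((-(lam ^ ν) * t) ^ k / k.factorial * dsc ((k:ℝ)*ν) n)
      = A k * (gbc ((k:ℝ) * ν) n * (-u) ^ n)
    rw [hA, gbc, neg_pow u n]
    ring
  rw [tsum_congr hterm]
  -- swap the order of summation
  have hswap : (∑' n : ℕ, ∑' k : ℕ, F (k, n)) = ∑' k : ℕ, ∑' n : ℕ, F (k, n) :=
    Summable.tsum_comm (f := fun k n => F (k, n)) (by exact hFsum)
  rw [hswap]
  -- evaluate the inner sums
  have hinner : ∀ k : ℕ, (∑' n : ℕ, F (k, n))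
      = (-(lam ^ ν * (1 - u) ^ ν) * t) ^ k / k.factorial := by
    intro k
    have hbin := binomial_hasSum ((k:ℝ) * ν) (x := -u) (by rwa [abs_neg])
    have h1 : (1 + -u) = 1 - u := by ring
    rw [h1] at hbin
    show (∑' n : ℕ, A k * (gbc ((k:ℝ) * ν) n * (-u) ^ n)) = _
    rw [tsum_mul_left, hbin.tsum_eq]
    have e2 : (1 - u) ^ ((k:ℝ) * ν) = ((1 - u) ^ ν) ^ k := by
      rw [show (k:ℝ) * ν = ν * (k:ℝ) by ring, Real.rpow_mul h1u.le, Real.rpow_natCast]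
    rw [e2, hA]
    show (-(lam ^ ν) * t) ^ k / k.factorial * ((1-u)^ν) ^ k = _
    rw [div_mul_eq_mul_div, ← mul_pow]
    congr 2
    ring
  rw [tsum_congr hinner]
  rw [Real.exp_eq_exp_ℝ, NormedSpace.exp_eq_tsum_div]
end

section
/- Let 0 < α ≤ 1, 0 < ν ≤ 1 and λ > 0. Define for natural numbers k, n and t ≥ 0 the Adomian components q_k(n,t) := ((-1)^n/n!) · (kν)_n · (-λ^ν t^α)^k / Γ(kα+1). Then q_0(0,t) = 1, q_0(n,t) = 0 for n ≥ 1, and for every k ≥ 1, every n and every t > 0 the Riemann–Liouville recursion holds: q_k(n,t) = -λ^ν · I^α_t ( s ↦ Σ_{r=0}^{n} (-1)^r ((ν)_r / r!) · q_{k-1}(n-r, s) ) (t). Consequently Σ_{k=0}^∞ q_k(n,t) equals the STFPP probability mass function p^α_ν(n,t). -/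
open Real Finset

/-- Falling factorial `(x)_r = x(x-1)⋯(x-r+1)`. -/
noncomputable def fallFac (x : ℝ) (r : ℕ) : ℝ := ∏ i ∈ Finset.range r, (x - i)

/-- Riemann–Liouville fractional integral `I^α_t`. -/
noncomputable def rlI (α : ℝ) (f : ℝ → ℝ) (t : ℝ) : ℝ :=
  (1 / Real.Gamma α) * ∫ s in (0:ℝ)..t, (t - s) ^ (α - 1) * f s

/-- Adomian components for the STFPP. -/
noncomputable def qSTF (α ν lam : ℝ) (k n : ℕ) (t : ℝ) : ℝ :=
  ((-1) ^ n / n.factorial) * fallFac ((k : ℝ) * ν) n *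
    (-(lam ^ ν) * t ^ α) ^ k / Real.Gamma ((k : ℝ) * α + 1)

lemma fallFac_zero (x : ℝ) : fallFac x 0 = 1 := by simp [fallFac]

lemma fallFac_succ (x : ℝ) (n : ℕ) : fallFac x (n + 1) = fallFac x n * (x - n) := by
  simp [fallFac, Finset.prod_range_succ]

/-- Vandermonde identity for falling factorials. -/
lemma fallFac_add (a b : ℝ) : ∀ n : ℕ,
    fallFac (a + b) n = ∑ r ∈ Finset.range (n + 1),
      (n.choose r : ℝ) * fallFac a r * fallFac b (n - r) := by
  intro n
  induction n with
  | zero => simp [fallFac]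
  | succ n ih =>
    have key : ∀ r ∈ Finset.range (n + 1),
        (n.choose r : ℝ) * fallFac a r * fallFac b (n - r) * ((a + b) - n)
          = (n.choose r : ℝ) * (fallFac a r * (a - r)) * fallFac b (n - r)
            + (n.choose r : ℝ) * fallFac a r * (fallFac b (n - r) * (b - (n - r))) := by
      intro r hr
      have hr' : r ≤ n := Nat.lt_succ_iff.mp (Finset.mem_range.mp hr)
      ring
    rw [fallFac_succ, ih, Finset.sum_mul, Finset.sum_congr rfl key, Finset.sum_add_distrib]
    -- rewrite second sum: fallFac b (n-r) * (b - (n-r)) = fallFac b (n+1-r)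
    have h2 : ∀ r ∈ Finset.range (n + 1),
        (n.choose r : ℝ) * fallFac a r * (fallFac b (n - r) * (b - ((n : ℝ) - r)))
          = (n.choose r : ℝ) * fallFac a r * fallFac b (n + 1 - r) := by
      intro r hr
      have hr' : r ≤ n := Nat.lt_succ_iff.mp (Finset.mem_range.mp hr)
      have : n + 1 - r = (n - r) + 1 := by omega
      rw [this, fallFac_succ]
      have hc : ((n - r : ℕ) : ℝ) = (n : ℝ) - r := by push_cast [Nat.cast_sub hr']; ring
      rw [hc]
    rw [Finset.sum_congr rfl h2]
    have e1 : ∀ i ∈ Finset.range (n + 1),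
        (((n + 1).choose (i + 1) : ℕ) : ℝ) * fallFac a (i + 1) * fallFac b (n + 1 - (i + 1))
          = (n.choose i : ℝ) * (fallFac a i * (a - i)) * fallFac b (n - i)
            + (n.choose (i + 1) : ℝ) * fallFac a (i + 1) * fallFac b (n - i) := by
      intro i hi
      rw [Nat.choose_succ_succ, Nat.succ_sub_succ, fallFac_succ]
      push_cast; ring
    have split := Finset.sum_range_succ'
      (fun j => (((n + 1).choose j : ℕ) : ℝ) * fallFac a j * fallFac b (n + 1 - j)) (n + 1)
    rw [split, Finset.sum_congr rfl e1, Finset.sum_add_distrib]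
    have split2 := Finset.sum_range_succ'
      (fun j => ((n.choose j : ℕ) : ℝ) * fallFac a j * fallFac b (n + 1 - j)) (n + 1)
    have top : ∑ j ∈ Finset.range (n + 1 + 1),
        ((n.choose j : ℕ) : ℝ) * fallFac a j * fallFac b (n + 1 - j)
        = ∑ j ∈ Finset.range (n + 1),
        ((n.choose j : ℕ) : ℝ) * fallFac a j * fallFac b (n + 1 - j) := by
      rw [Finset.sum_range_succ, Nat.choose_succ_self]; simp
    have e2 : ∀ i ∈ Finset.range (n + 1),
        ((n.choose (i + 1) : ℕ) : ℝ) * fallFac a (i + 1) * fallFac b (n + 1 - (i + 1))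
          = ((n.choose (i + 1) : ℕ) : ℝ) * fallFac a (i + 1) * fallFac b (n - i) := by
      intro i hi; rw [Nat.succ_sub_succ]
    rw [Finset.sum_congr rfl e2] at split2
    rw [top] at split2
    simp only [Nat.choose_zero_right, Nat.cast_one, fallFac_zero, Nat.sub_zero, one_mul,
      mul_one] at split2 ⊢
    linarith [split2]

lemma gamma_fallFac (x : ℝ) (hx : 0 ≤ x) (n : ℕ) :
    Real.Gamma (x + 1) / Real.Gamma (x + 1 - n) = fallFac x n := by
  by_cases h : ∃ j : ℕ, j < n ∧ x = (j : ℝ)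
  · obtain ⟨j, hj, rfl⟩ := h
    have h1 : fallFac (j : ℝ) n = 0 := by
      apply Finset.prod_eq_zero (Finset.mem_range.mpr hj)
      simp
    have h2 : Real.Gamma ((j : ℝ) + 1 - n) = 0 := by
      have hc : ((n - j - 1 : ℕ) : ℝ) = (n : ℝ) - j - 1 := by
        have h' : n - j - 1 = n - (j + 1) := by omega
        rw [h', Nat.cast_sub (by omega)]; push_cast; ring
      have : ((j : ℝ) + 1 - n) = -((n - j - 1 : ℕ) : ℝ) := by rw [hc]; ring
      rw [this, Real.Gamma_neg_nat_eq_zero]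
    rw [h1, h2, div_zero]
  · push_neg at h
    have hne : ∀ i : ℕ, i < n → x ≠ (i : ℝ) := fun i hi => h i hi
    have key : ∀ m : ℕ, (∀ i : ℕ, i < m → x ≠ (i : ℝ)) →
        Real.Gamma (x + 1) = fallFac x m * Real.Gamma (x + 1 - m) := by
      intro m
      induction m with
      | zero => simp [fallFac]
      | succ m ih =>
        intro hm
        have hxm : x - m ≠ 0 := sub_ne_zero.mpr (hm m (Nat.lt_succ_self m))
        have : Real.Gamma (x + 1 - m) = (x - m) * Real.Gamma (x - m) := by
          have : x + 1 - m = (x - m) + 1 := by ring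
          rw [this, Real.Gamma_add_one hxm]
        rw [ih (fun i hi => hm i (Nat.lt_succ_of_lt hi)), this, fallFac_succ]
        have : x + 1 - ((m : ℕ) + 1 : ℕ) = x - m := by push_cast; ring
        rw [this]; ring
    have hG : Real.Gamma (x + 1 - n) ≠ 0 := by
      apply Real.Gamma_ne_zero
      intro m hm
      rcases le_or_gt (m + 1) n with hc | hc
      · exact hne (n - (m + 1)) (by omega) (by push_cast [Nat.cast_sub hc]; linarith)
      · have hx' : x = (n : ℝ) - 1 - m := by linarith
        have hnm : (n : ℝ) ≤ (m : ℝ) := by exact_mod_cast (by omega : n ≤ m)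
        linarith
    rw [key n hne, mul_div_assoc, div_self hG, mul_one]

lemma real_beta (u v : ℝ) (hu : 0 < u) (hv : 0 < v) :
    ∫ x in (0:ℝ)..1, x ^ (u - 1) * (1 - x) ^ (v - 1)
      = Real.Gamma u * Real.Gamma v / Real.Gamma (u + v) := by
  have hC := Complex.Gamma_mul_Gamma_eq_betaIntegral
    (s := (u : ℂ)) (t := (v : ℂ)) (by simpa using hu) (by simpa using hv)
  have hbeta : Complex.betaIntegral (u : ℂ) (v : ℂ)
      = ((∫ x in (0:ℝ)..1, x ^ (u - 1) * (1 - x) ^ (v - 1) : ℝ) : ℂ) := by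
    rw [Complex.betaIntegral, ← intervalIntegral.integral_ofReal]
    apply intervalIntegral.integral_congr
    intro x hx
    rw [Set.uIcc_of_le (by norm_num : (0:ℝ) ≤ 1)] at hx
    obtain ⟨hx0, hx1⟩ := hx
    push_cast
    rw [Complex.ofReal_cpow hx0, Complex.ofReal_cpow (by linarith : (0:ℝ) ≤ 1 - x)]
    push_cast
    ring
  rw [hbeta, Complex.Gamma_ofReal, Complex.Gamma_ofReal, ← Complex.ofReal_add,
    Complex.Gamma_ofReal, ← Complex.ofReal_mul, ← Complex.ofReal_mul] at hC
  have hGsum : Real.Gamma (u + v) ≠ 0 := (Real.Gamma_pos_of_pos (by linarith)).ne'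
  have := Complex.ofReal_inj.mp hC
  field_simp at this ⊢
  linarith [this]

lemma rlI_rpow (α β t : ℝ) (hα : 0 < α) (hβ : 0 ≤ β) (ht : 0 < t) :
    rlI α (fun s => s ^ β) t = (Real.Gamma (β + 1) / Real.Gamma (α + β + 1)) * t ^ (α + β) := by
  have htne : t ≠ 0 := ht.ne'
  have hsub : (∫ s in (0:ℝ)..t, (t - s) ^ (α - 1) * s ^ β)
      = t • ∫ x in (0:ℝ)..1, (t - t * x) ^ (α - 1) * (t * x) ^ β := by
    rw [intervalIntegral.integral_comp_mul_left (fun s => (t - s) ^ (α - 1) * s ^ β) htne]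
    rw [mul_zero, mul_one, smul_smul, mul_inv_cancel₀ htne, one_smul]
  have hcong : ∀ x ∈ Set.uIcc (0:ℝ) 1,
      (t - t * x) ^ (α - 1) * (t * x) ^ β
        = (t ^ (α - 1) * t ^ β) * (x ^ β * (1 - x) ^ (α - 1)) := by
    intro x hx
    rw [Set.uIcc_of_le (by norm_num : (0:ℝ) ≤ 1)] at hx
    obtain ⟨hx0, hx1⟩ := hx
    have h1 : t - t * x = t * (1 - x) := by ring
    rw [h1, Real.mul_rpow ht.le (by linarith), Real.mul_rpow ht.le hx0]
    ring
  have hint : (∫ x in (0:ℝ)..1, (t - t * x) ^ (α - 1) * (t * x) ^ β)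
      = (t ^ (α - 1) * t ^ β) * ∫ x in (0:ℝ)..1, x ^ β * (1 - x) ^ (α - 1) := by
    rw [intervalIntegral.integral_congr hcong, intervalIntegral.integral_const_mul]
  have hbeta : (∫ x in (0:ℝ)..1, x ^ β * (1 - x) ^ (α - 1))
      = Real.Gamma (β + 1) * Real.Gamma α / Real.Gamma (β + 1 + α) := by
    have := real_beta (β + 1) α (by linarith) hα
    simpa using this
  rw [rlI, hsub, hint, hbeta, smul_eq_mul]
  have hGα : Real.Gamma α ≠ 0 := (Real.Gamma_pos_of_pos hα).ne'
  have hGs : Real.Gamma (β + 1 + α) ≠ 0 := (Real.Gamma_pos_of_pos (by linarith)).ne'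
  have hts : t * (t ^ (α - 1) * t ^ β) = t ^ (α + β) := by
    have h' : α + β = 1 + (α - 1) + β := by ring
    rw [h', Real.rpow_add ht, Real.rpow_add ht, Real.rpow_one]
    ring
  have hGcomm : Real.Gamma (β + 1 + α) = Real.Gamma (α + β + 1) := by ring_nf
  rw [hGcomm] at hGs ⊢
  field_simp
  linear_combination hts

lemma rlI_smul (α t C γ : ℝ) (f : ℝ → ℝ)
    (h : Set.EqOn f (fun s => C * s ^ γ) (Set.uIcc 0 t)) :
    rlI α f t = C * rlI α (fun s : ℝ => s ^ γ) t := by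
  unfold rlI
  have he : (∫ s in (0:ℝ)..t, (t - s) ^ (α - 1) * f s)
      = ∫ s in (0:ℝ)..t, C * ((t - s) ^ (α - 1) * s ^ γ) := by
    apply intervalIntegral.integral_congr
    intro s hs
    have h' : f s = C * s ^ γ := h hs
    simp only
    rw [h']; ring
  rw [he, intervalIntegral.integral_const_mul]; ring

theorem stfpp_adomian_decomposition (α ν lam : ℝ) (hα0 : 0 < α) (hα1 : α ≤ 1)
    (hν0 : 0 < ν) (hν1 : ν ≤ 1) (hlam : 0 < lam) :
    (∀ t : ℝ, 0 ≤ t → qSTF α ν lam 0 0 t = 1) ∧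
    (∀ n : ℕ, 1 ≤ n → ∀ t : ℝ, 0 ≤ t → qSTF α ν lam 0 n t = 0) ∧
    (∀ k : ℕ, 1 ≤ k → ∀ (n : ℕ) (t : ℝ), 0 < t →
      qSTF α ν lam k n t =
        -(lam ^ ν) * rlI α (fun s => ∑ r ∈ Finset.range (n + 1),
          (-1) ^ r * (fallFac ν r / r.factorial) * qSTF α ν lam (k - 1) (n - r) s) t) ∧
    (∀ (n : ℕ) (t : ℝ), 0 ≤ t → (∑' k : ℕ, qSTF α ν lam k n t) = pSTF α ν lam n t) := by
  refine ⟨?_, ?_, ?_, ?_⟩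
  · intro t ht
    simp [qSTF, fallFac, Real.Gamma_one]
  · intro n hn t ht
    have h0 : fallFac (0 : ℝ) n = 0 := by
      apply Finset.prod_eq_zero (Finset.mem_range.mpr (by omega : 0 < n))
      simp
    simp [qSTF, h0]
  · intro k hk n t ht
    obtain ⟨m, rfl⟩ : ∃ m, k = m + 1 := ⟨k - 1, by omega⟩
    simp only [Nat.add_sub_cancel]
    set L := lam ^ ν with hL
    have hGm : Real.Gamma ((m : ℝ) * α + 1) ≠ 0 := by
      refine (Real.Gamma_pos_of_pos ?_).ne'
      positivity
    set C : ℝ := (((-1 : ℝ) ^ n / n.factorial) * fallFac (((m : ℝ) + 1) * ν) n) *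
      ((-L) ^ m / Real.Gamma ((m : ℝ) * α + 1)) with hC
    -- integrand equality
    have heq : Set.EqOn (fun s => ∑ r ∈ Finset.range (n + 1),
        (-1 : ℝ) ^ r * (fallFac ν r / r.factorial) * qSTF α ν lam m (n - r) s)
        (fun s => C * s ^ ((m : ℝ) * α)) (Set.uIcc 0 t) := by
      intro s hs
      rw [Set.uIcc_of_le ht.le] at hs
      have hs0 : (0:ℝ) ≤ s := hs.1
      have hpow : (-L * s ^ α) ^ m = (-L) ^ m * s ^ ((m : ℝ) * α) := by
        rw [mul_pow, ← Real.rpow_natCast (s ^ α) m, ← Real.rpow_mul hs0, mul_comm α (m:ℝ)]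
      simp only
      have hterm : ∀ r ∈ Finset.range (n + 1),
          (-1 : ℝ) ^ r * (fallFac ν r / r.factorial) * qSTF α ν lam m (n - r) s
            = ((-1 : ℝ) ^ r * (fallFac ν r / r.factorial) *
                ((-1 : ℝ) ^ (n - r) / (n - r).factorial * fallFac ((m : ℝ) * ν) (n - r))) *
              (((-L) ^ m / Real.Gamma ((m : ℝ) * α + 1)) * s ^ ((m : ℝ) * α)) := by
        intro r hr
        rw [qSTF, hpow]
        ring
      rw [Finset.sum_congr rfl hterm, ← Finset.sum_mul]
      have hA : ∑ r ∈ Finset.range (n + 1), (-1 : ℝ) ^ r * (fallFac ν r / r.factorial) *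
          ((-1 : ℝ) ^ (n - r) / (n - r).factorial * fallFac ((m : ℝ) * ν) (n - r))
          = ((-1 : ℝ) ^ n / n.factorial) * fallFac (((m : ℝ) + 1) * ν) n := by
        have hmn : ((m : ℝ) + 1) * ν = ν + (m : ℝ) * ν := by ring
        rw [hmn, fallFac_add, Finset.mul_sum]
        apply Finset.sum_congr rfl
        intro r hr
        have hr' : r ≤ n := Nat.lt_succ_iff.mp (Finset.mem_range.mp hr)
        have hsign : (-1 : ℝ) ^ r * (-1 : ℝ) ^ (n - r) = (-1 : ℝ) ^ n := by
          rw [← pow_add]; congr 1; omega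
        have hfac : ((n.choose r : ℕ) : ℝ) * r.factorial * (n - r).factorial
            = (n.factorial : ℝ) := by
          exact_mod_cast congrArg (Nat.cast (R := ℝ))
            (Nat.choose_mul_factorial_mul_factorial hr')
        have hrne : (r.factorial : ℝ) ≠ 0 := Nat.cast_ne_zero.mpr r.factorial_ne_zero
        have hnrne : ((n - r).factorial : ℝ) ≠ 0 := Nat.cast_ne_zero.mpr (n - r).factorial_ne_zero
        have hnne : (n.factorial : ℝ) ≠ 0 := Nat.cast_ne_zero.mpr n.factorial_ne_zero
        have hchoose : ((n.choose r : ℕ) : ℝ)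
            = (n.factorial : ℝ) / ((r.factorial : ℝ) * ((n - r).factorial : ℝ)) := by
          field_simp
          linarith [hfac]
        rw [hchoose, ← hsign]
        field_simp
      rw [hA, hC]
      ring
    rw [rlI_smul α t C ((m : ℝ) * α) _ heq,
      rlI_rpow α ((m : ℝ) * α) t hα0 (by positivity) ht]
    have hGc : Real.Gamma (α + (m : ℝ) * α + 1) = Real.Gamma (((m : ℝ) + 1) * α + 1) := by
      ring_nf
    have hGc2 : Real.Gamma ((m : ℝ) * α + 1 + 1 - 1) = Real.Gamma ((m : ℝ) * α + 1) := by
      ring_nf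
    have hG2 : Real.Gamma (((m : ℝ) + 1) * α + 1) ≠ 0 := by
      refine (Real.Gamma_pos_of_pos ?_).ne'
      have : (0:ℝ) ≤ (m : ℝ) * α := by positivity
      nlinarith
    have hq : qSTF α ν lam (m + 1) n t
        = ((-1 : ℝ) ^ n / n.factorial) * fallFac (((m : ℝ) + 1) * ν) n *
          ((-L) ^ (m + 1) * t ^ (((m : ℝ) + 1) * α)) / Real.Gamma (((m : ℝ) + 1) * α + 1) := by
      rw [qSTF]
      have hpow : (-L * t ^ α) ^ (m + 1) = (-L) ^ (m + 1) * t ^ (((m : ℝ) + 1) * α) := by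
        rw [mul_pow, ← Real.rpow_natCast (t ^ α) (m + 1), ← Real.rpow_mul ht.le]
        push_cast
        rw [mul_comm α ((m:ℝ) + 1)]
      rw [hpow]
      push_cast
      ring
    rw [hq, hC, hGc]
    have hts : t ^ (α + (m : ℝ) * α) = t ^ (((m : ℝ) + 1) * α) := by ring_nf
    rw [hts]
    have hGγ : Real.Gamma ((m : ℝ) * α + 1) = Real.Gamma ((m : ℝ) * α + 1) := rfl
    field_simp
    ring
  · intro n t ht
    rw [pSTF, ← tsum_mul_left]
    apply tsum_congr
    intro k
    rw [qSTF, ← gamma_fallFac ((k : ℝ) * ν) (by positivity) n]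
    ring
end
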